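/- arXiv:2305.17163 — 9 statements merged into one kernel-verified Lean document; each statement's English description precedes it below -/
import Mathlib

section
/- Let A be a d×d complex matrix with operator norm at most 1, let v be a unit vector, and suppose A^n v = Σ_{i=0}^{n-1} λ_i A^i v with v, Av, ..., A^(n-1)v linearly independent. Then Σ_{i=0}^{n-1} |λ_i| ≤ n·(n+1)!/2. -/
open Polynomial Finset

private lemma krylov_aux_nat (n : ℕ) : 2 * (2 ^ n - 1) ≤ n * Nat.factorial (n + 1) := by
  induction n with
  | zero => simp
  | succ n ih =>
    have h1 : 1 ≤ 2 ^ n := Nat.one_le_two_pow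
    have h2 : 2 ^ (n + 1) - 1 = 2 * (2 ^ n - 1) + 1 := by
      rw [pow_succ]; omega
    have h3 : 1 ≤ Nat.factorial (n + 1) := Nat.one_le_iff_ne_zero.mpr (Nat.factorial_ne_zero _)
    rw [h2]
    have h4 : Nat.factorial (n + 2) = (n + 2) * Nat.factorial (n + 1) := rfl
    nlinarith [ih, h3]

theorem krylov_coeff_bound_of_norm_le_one
    (d n : ℕ) (A : Matrix (Fin d) (Fin d) ℂ)
    (hA : ‖Matrix.toEuclideanCLM (𝕜 := ℂ) A‖ ≤ 1)
    (v : EuclideanSpace ℂ (Fin d)) (hv : ‖v‖ = 1)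
    (lam : Fin n → ℂ)
    (hdep : (Matrix.toEuclideanCLM (𝕜 := ℂ) A ^ n) v
      = ∑ i : Fin n, lam i • (Matrix.toEuclideanCLM (𝕜 := ℂ) A ^ (i : ℕ)) v)
    (hind : LinearIndependent ℂ
      (fun i : Fin n => (Matrix.toEuclideanCLM (𝕜 := ℂ) A ^ (i : ℕ)) v)) :
    ∑ i : Fin n, ‖lam i‖ ≤ n * (Nat.factorial (n + 1)) / 2 := by
  rcases Nat.eq_zero_or_pos n with hn0 | hn
  · subst hn0; simp
  set T := Matrix.toEuclideanCLM (𝕜 := ℂ) A with hT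
  set q : ℂ[X] := ∑ i : Fin n, C (lam i) * X ^ (i : ℕ) with hqdef
  set p : ℂ[X] := X ^ n - q with hpdef
  -- degree of q is < n
  have hqdeg : q.degree < (n : ℕ) := by
    apply lt_of_le_of_lt (degree_sum_le _ _)
    rw [Finset.sup_lt_iff (by exact_mod_cast WithBot.bot_lt_coe n)]
    intro i _
    calc (C (lam i) * X ^ (i : ℕ)).degree ≤ ((i : ℕ) : WithBot ℕ) :=
          degree_C_mul_X_pow_le _ _
      _ < ((n : ℕ) : WithBot ℕ) := WithBot.coe_lt_coe.mpr i.2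
  have hXdeg : (X ^ n : ℂ[X]).degree = (n : ℕ) := degree_X_pow n
  have hpdeg : p.degree = (n : ℕ) := by
    rw [hpdef, degree_sub_eq_left_of_degree_lt (hXdeg ▸ hqdeg), hXdeg]
  have hpnat : p.natDegree = n := natDegree_eq_of_degree_eq_some hpdeg
  have hpmonic : p.Monic := by
    rw [Monic, leadingCoeff, hpnat, hpdef, coeff_sub, coeff_X_pow, if_pos rfl,
      coeff_eq_zero_of_degree_lt hqdeg, sub_zero]
  have hpne : p ≠ 0 := hpmonic.ne_zero
  -- aeval of p at T kills v
  have haq : ∀ r : ℂ[X], (aeval T r) v = ∑ i ∈ Finset.range (r.natDegree + 1), r.coeff i • (T ^ i) v := by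
    intro r
    rw [aeval_eq_sum_range]
    simp [ContinuousLinearMap.sum_apply]
  have hkill : (aeval T p) v = 0 := by
    have : (aeval T p) v = (T ^ n) v - ∑ i : Fin n, lam i • (T ^ (i : ℕ)) v := by
      rw [hpdef, map_sub, map_sum]
      simp [map_mul, aeval_C, aeval_X_pow, ContinuousLinearMap.sub_apply,
        ContinuousLinearMap.sum_apply, ContinuousLinearMap.mul_apply,
        Algebra.algebraMap_eq_smul_one, ContinuousLinearMap.smul_apply,
        ContinuousLinearMap.one_apply]
    rw [this, hdep, sub_self]
  -- linear independence: low-degree annihilators are zero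
  have hzero : ∀ r : ℂ[X], r.degree < (n : ℕ) → (aeval T r) v = 0 → r = 0 := by
    intro r hrdeg hr0
    by_contra hr
    have hrn : r.natDegree < n := (natDegree_lt_iff_degree_lt hr).mpr hrdeg
    have hsum : ∑ i : Fin n, r.coeff (i : ℕ) • (T ^ (i : ℕ)) v = 0 := by
      rw [← hr0, aeval_eq_sum_range' (n := n) hrn]
      simp [ContinuousLinearMap.sum_apply, Fin.sum_univ_eq_sum_range
        (fun i => r.coeff i • (T ^ i) v)]
      exact Fin.sum_univ_eq_sum_range (fun i => r.coeff i • (⇑T)^[i] v) n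
    have hc := (Fintype.linearIndependent_iff.mp hind) (fun i => r.coeff (i : ℕ)) hsum
    apply hr
    ext i
    rcases lt_or_ge i n with hi | hi
    · exact hc ⟨i, hi⟩
    · exact coeff_eq_zero_of_natDegree_lt (lt_of_lt_of_le hrn hi)
  -- each root of p has norm ≤ 1
  have hroots : ∀ z ∈ (p.map (RingHom.id ℂ)).roots, ‖z‖ ≤ 1 := by
    intro μ hμ
    rw [Polynomial.map_id] at hμ
    have hroot : p.IsRoot μ := isRoot_of_mem_roots hμ
    set r : ℂ[X] := p /ₘ (X - C μ) with hrdef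
    have hfac : (X - C μ) * r = p := (mul_divByMonic_eq_iff_isRoot).mpr hroot
    have hrdeg : r.degree < (n : ℕ) := by
      rw [← hpdeg]
      exact degree_divByMonic_lt p (X - C μ) hpne (by simp [degree_X_sub_C])
    set u := (aeval T r) v with hudef
    have hune : u ≠ 0 := by
      intro h0
      have : r = 0 := hzero r hrdeg h0
      rw [this, mul_zero] at hfac
      exact hpne hfac.symm
    have heig : T u = μ • u := by
      have : (aeval T ((X - C μ) * r)) v = 0 := by rw [hfac]; exact hkill
      rw [map_mul] at this
      simp only [map_sub, aeval_X, aeval_C] at this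
      have h2 : (T - algebraMap ℂ _ μ) u = 0 := by
        simpa [hudef] using this
      have h3 : T u - μ • u = 0 := by
        simpa [ContinuousLinearMap.sub_apply, Algebra.algebraMap_eq_smul_one] using h2
      exact sub_eq_zero.mp h3
    have hnorm : ‖μ‖ * ‖u‖ ≤ 1 * ‖u‖ := by
      calc ‖μ‖ * ‖u‖ = ‖μ • u‖ := (norm_smul μ u).symm
        _ = ‖T u‖ := by rw [heig]
        _ ≤ ‖T‖ * ‖u‖ := T.le_opNorm u
        _ ≤ 1 * ‖u‖ := by
            exact mul_le_mul_of_nonneg_right hA (norm_nonneg u)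
    exact le_of_mul_le_mul_right (by simpa using hnorm) (norm_pos_iff.mpr hune)
  -- coefficient bound
  have hsplits : Splits (p.map (RingHom.id ℂ)) := IsAlgClosed.splits _
  have hcoeff : ∀ i : Fin n, ‖lam i‖ ≤ (n.choose (i : ℕ) : ℝ) := by
    intro i
    have hb := coeff_le_of_roots_le (i : ℕ) hpmonic hsplits hroots
    rw [Polynomial.map_id, hpnat] at hb
    have hcf : p.coeff (i : ℕ) = -lam i := by
      rw [hpdef, coeff_sub, coeff_X_pow, if_neg (Nat.ne_of_lt i.2), hqdef,
        finset_sum_coeff]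
      rw [Finset.sum_eq_single i]
      · simp
      · intro j _ hj
        have : (i : ℕ) ≠ (j : ℕ) := fun h => hj (Fin.ext h.symm)
        simp [coeff_C_mul, coeff_X_pow, if_neg this]
      · simp
    rw [hcf] at hb
    simpa using hb
  have hsum2 : ∑ i : Fin n, ‖lam i‖ ≤ ((2 ^ n - 1 : ℕ) : ℝ) := by
    calc ∑ i : Fin n, ‖lam i‖ ≤ ∑ i : Fin n, (n.choose (i : ℕ) : ℝ) :=
          Finset.sum_le_sum fun i _ => hcoeff i
      _ = ((∑ i ∈ Finset.range n, n.choose i : ℕ) : ℝ) := by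
          rw [Fin.sum_univ_eq_sum_range (fun i => (n.choose i : ℝ)) n, Nat.cast_sum]
      _ = ((2 ^ n - 1 : ℕ) : ℝ) := by
          congr 1
          have := Nat.sum_range_choose n
          have h2 : ∑ i ∈ Finset.range (n + 1), n.choose i
              = (∑ i ∈ Finset.range n, n.choose i) + n.choose n := Finset.sum_range_succ _ _
          simp [Nat.choose_self] at h2
          omega
  refine hsum2.trans ?_
  rw [le_div_iff₀ (by norm_num : (0:ℝ) < 2)]
  have hN : (2 ^ n - 1) * 2 ≤ n * Nat.factorial (n + 1) := by
    have := krylov_aux_nat n; linarith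
  exact_mod_cast hN
end

section
/- Let A be a nonzero d×d complex matrix, v a unit vector, and suppose A^n v = Σ_{i=0}^{n-1} λ_i A^i v with v, Av, ..., A^(n-1)v linearly independent. Then Σ_{i=0}^{n-1} |λ_i| ≤ n·((n+1)!/2)·max(‖A‖_∞, ‖A‖_∞^n). -/
open Polynomial Finset

-- numeric lemma: 2 * choose n k ≤ (n+1)! for n ≥ 1
lemma aux_two_pow_le_fact : ∀ m, 4 ≤ m → 2 ^ m ≤ Nat.factorial m := by
  intro m hm
  induction m with
  | zero => omega
  | succ k ih =>
    rcases Nat.lt_or_ge k 4 with h | h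
    · have hk : k = 3 := by omega
      subst hk; decide
    · have := ih (by omega)
      rw [pow_succ, Nat.factorial_succ]
      calc 2 ^ k * 2 ≤ Nat.factorial k * 2 := by omega
        _ ≤ (k+1) * Nat.factorial k := by nlinarith [Nat.factorial_pos k]

lemma aux_choose : ∀ n k : ℕ, 1 ≤ n → 2 * Nat.choose n k ≤ Nat.factorial (n+1) := by
  intro n k hn
  have hle : Nat.choose n k ≤ 2 ^ n := by
    rcases Nat.lt_or_ge n k with h | h
    · simp [Nat.choose_eq_zero_of_lt h]
    · calc Nat.choose n k ≤ ∑ m ∈ range (n+1), Nat.choose n m :=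
            Finset.single_le_sum (fun i _ => Nat.zero_le _) (by simp; omega)
        _ = 2 ^ n := Nat.sum_range_choose n
  have hmid := Nat.choose_le_middle k n
  rcases Nat.lt_or_ge n 3 with h | h
  · interval_cases n <;>
      · norm_num [Nat.factorial, Nat.choose] at hmid ⊢
        omega
  · have h4 : 4 ≤ n + 1 := by omega
    have := aux_two_pow_le_fact (n+1) h4
    calc 2 * Nat.choose n k ≤ 2 * 2 ^ n := by omega
      _ = 2 ^ (n+1) := by ring
      _ ≤ Nat.factorial (n+1) := this

theorem krylov_coeff_bound_general
    (d n : ℕ) (A : Matrix (Fin d) (Fin d) ℂ) (hA : A ≠ 0)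
    (v : EuclideanSpace ℂ (Fin d)) (hv : ‖v‖ = 1)
    (lam : Fin n → ℂ)
    (hdep : (Matrix.toEuclideanCLM (𝕜 := ℂ) A ^ n) v
      = ∑ i : Fin n, lam i • (Matrix.toEuclideanCLM (𝕜 := ℂ) A ^ (i : ℕ)) v)
    (hind : LinearIndependent ℂ
      (fun i : Fin n => (Matrix.toEuclideanCLM (𝕜 := ℂ) A ^ (i : ℕ)) v)) :
    ∑ i : Fin n, ‖lam i‖
      ≤ n * ((Nat.factorial (n + 1) : ℝ) / 2) *
        max ‖Matrix.toEuclideanCLM (𝕜 := ℂ) A‖ (‖Matrix.toEuclideanCLM (𝕜 := ℂ) A‖ ^ n) := by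
  set f := Matrix.toEuclideanCLM (𝕜 := ℂ) A with hfdef
  set M : ℝ := ‖f‖ with hMdef
  have hM0 : 0 ≤ M := norm_nonneg _
  -- n ≥ 1
  have hn : 1 ≤ n := by
    by_contra h
    push_neg at h
    interval_cases n
    simp at hdep
    rw [hdep] at hv
    simp at hv
  -- the polynomial
  set q : ℂ[X] := ∑ i : Fin n, C (lam i) * X ^ (i : ℕ) with hqdef
  have hqdeg : q.degree < n := by
    apply lt_of_le_of_lt (degree_sum_le _ _)
    rw [Finset.sup_lt_iff (by exact_mod_cast WithBot.bot_lt_coe n)]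
    intro i _
    exact lt_of_le_of_lt (degree_C_mul_X_pow_le _ _) (by exact_mod_cast i.isLt)
  set p : ℂ[X] := X ^ n - q with hpdef
  have hpm : p.Monic := monic_X_pow_sub (by exact_mod_cast hqdeg)
  have hpdeg : p.natDegree = n := by
    have : p.degree = n := by
      rw [hpdef, degree_sub_eq_left_of_degree_lt (by simpa [degree_X_pow] using hqdeg)]
      exact degree_X_pow n
    exact natDegree_eq_of_degree_eq_some this
  -- coefficients of p below n
  have hqcoeff : ∀ i : Fin n, q.coeff (i : ℕ) = lam i := by
    intro i
    rw [hqdef, finset_sum_coeff]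
    rw [Finset.sum_eq_single i]
    · simp
    · intro j _ hji
      simp only [coeff_C_mul, coeff_X_pow]
      rw [if_neg (fun h => hji (Fin.ext h.symm)), mul_zero]
    · simp
  have hpcoeff : ∀ i : Fin n, p.coeff (i : ℕ) = -lam i := by
    intro i
    rw [hpdef, coeff_sub, coeff_X_pow, if_neg (Nat.ne_of_lt i.isLt), hqcoeff]
    ring
  -- p(f) v = 0
  have haeval : (aeval f p) v = 0 := by
    rw [hpdef, hqdef, map_sub, map_sum, ContinuousLinearMap.sub_apply, map_pow, aeval_X,
      ContinuousLinearMap.sum_apply, sub_eq_zero, hdep]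
    apply Finset.sum_congr rfl
    intro i _
    rw [map_mul, aeval_C, map_pow, aeval_X, Algebra.algebraMap_eq_smul_one]
    simp
  -- every root of p is bounded in norm by M
  have hroot : ∀ z ∈ (p.map (RingHom.id ℂ)).roots, ‖z‖ ≤ M := by
    intro z hz
    rw [Polynomial.map_id] at hz
    have hzr : p.IsRoot z := isRoot_of_mem_roots hz
    set r : ℂ[X] := p /ₘ (X - C z) with hrdef
    have hfact : (X - C z) * r = p := mul_divByMonic_eq_iff_isRoot.mpr hzr
    have hp0 : p ≠ 0 := hpm.ne_zero
    have hr0 : r ≠ 0 := by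
      intro h; rw [h, mul_zero] at hfact; exact hp0 hfact.symm
    have hrlc : r.leadingCoeff = 1 := by
      have := congrArg leadingCoeff hfact
      rwa [leadingCoeff_mul, leadingCoeff_X_sub_C, one_mul, hpm.leadingCoeff] at this
    have hrdeg : r.natDegree = n - 1 := by
      have := congrArg natDegree hfact
      rw [natDegree_mul (X_sub_C_ne_zero z) hr0, natDegree_X_sub_C, hpdeg] at this
      omega
    set x := (aeval f r) v with hxdef
    have hxsum : x = ∑ i : Fin n, r.coeff (i : ℕ) • (f ^ (i : ℕ)) v := by
      rw [hxdef, aeval_eq_sum_range' (n := n) (by omega) f]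
      rw [ContinuousLinearMap.sum_apply, Fin.sum_univ_eq_sum_range
        (fun i => r.coeff i • (f ^ i) v)]
      simp
    have hx0 : x ≠ 0 := by
      intro h
      have := linearIndependent_iff'.mp hind Finset.univ (fun i => r.coeff (i : ℕ))
        (by rw [← hxsum, h]) ⟨n - 1, by omega⟩ (Finset.mem_univ _)
      have h2 : r.coeff (n - 1) = 0 := this
      rw [← hrdeg, ← leadingCoeff, hrlc] at h2
      exact one_ne_zero h2
    have hfx : f x = z • x := by
      have : (aeval f (X - C z)) ((aeval f r) v) = 0 := by
        rw [← ContinuousLinearMap.mul_apply, ← map_mul, hfact, haeval]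
      rw [map_sub, aeval_X, aeval_C, ContinuousLinearMap.sub_apply,
        Algebra.algebraMap_eq_smul_one] at this
      simp only [ContinuousLinearMap.smul_apply, ContinuousLinearMap.one_apply] at this
      rw [sub_eq_zero] at this
      exact this
    have : ‖z‖ * ‖x‖ ≤ M * ‖x‖ := by
      rw [← norm_smul, ← hfx]
      exact f.le_opNorm x
    exact le_of_mul_le_mul_right this (norm_pos_iff.mpr hx0)
  -- coefficient bounds
  have hsplits : Splits (p.map (RingHom.id ℂ)) := IsAlgClosed.splits _
  have hcb : ∀ i : Fin n, ‖lam i‖ ≤ ((Nat.factorial (n+1) : ℝ) / 2) * max M (M ^ n) := by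
    intro i
    have h1 := coeff_le_of_roots_le (i : ℕ) hpm hsplits hroot
    rw [Polynomial.map_id, hpdeg] at h1
    have h2 : ‖lam i‖ = ‖p.coeff (i : ℕ)‖ := by
      rw [hpcoeff i, norm_neg]
    have hpow : M ^ (n - (i : ℕ)) ≤ max M (M ^ n) := by
      have hk1 : 1 ≤ n - (i : ℕ) := by omega
      have hkn : n - (i : ℕ) ≤ n := by omega
      rcases le_total M 1 with hM1 | hM1
      · exact le_max_of_le_left (by
          calc M ^ (n - (i : ℕ)) ≤ M ^ 1 := pow_le_pow_of_le_one hM0 hM1 hk1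
            _ = M := pow_one M)
      · exact le_max_of_le_right (pow_le_pow_right₀ hM1 hkn)
    have hch : (Nat.choose n (i : ℕ) : ℝ) ≤ (Nat.factorial (n+1) : ℝ) / 2 := by
      rw [le_div_iff₀ (by norm_num : (0:ℝ) < 2)]
      have := aux_choose n (i : ℕ) hn
      exact_mod_cast (by omega : Nat.choose n (i : ℕ) * 2 ≤ Nat.factorial (n+1))
    calc ‖lam i‖ = ‖p.coeff (i : ℕ)‖ := h2
      _ ≤ M ^ (n - (i : ℕ)) * (Nat.choose n (i : ℕ) : ℝ) := h1
      _ ≤ max M (M ^ n) * ((Nat.factorial (n+1) : ℝ) / 2) := by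
          apply mul_le_mul hpow hch (by positivity)
          exact le_max_of_le_left hM0
      _ = ((Nat.factorial (n+1) : ℝ) / 2) * max M (M ^ n) := by ring
  calc ∑ i : Fin n, ‖lam i‖
      ≤ ∑ _i : Fin n, ((Nat.factorial (n+1) : ℝ) / 2) * max M (M ^ n) :=
        Finset.sum_le_sum (fun i _ => hcb i)
    _ = n * ((Nat.factorial (n + 1) : ℝ) / 2) * max M (M ^ n) := by
        rw [Finset.sum_const, Finset.card_univ, Fintype.card_fin, nsmul_eq_mul]; ring
end

section
/- Define n(d) := Σ_{m=1}^{d} (d choose m)·m!·m^(d-m). Then n(d) = Σ_{m=1}^{d} (d!/(d-m)!)·m^(d-m), and the ratio n(d)/d^d tends to 0 as d → ∞. -/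
open Finset Filter

private lemma key_term (d m : ℕ) (h2 : m ≤ d) :
    d.choose m * m.factorial * m ^ (d - m) * 4 ^ (d / 4) ≤ d ^ d * 3 ^ (d / 4) := by
  have hdf : d.choose m * m.factorial = d.descFactorial m := by
    rw [Nat.descFactorial_eq_factorial_mul_choose, mul_comm]
  rw [hdf]
  by_cases hc : 2 * m ≤ d
  · -- small m : use m ^ (d-m) ≤ (d/2) ^ (d-m)
    have h3 : d / 4 ≤ d - m := by omega
    have e1 : d.descFactorial m ≤ d ^ m := Nat.descFactorial_le_pow d m
    have e2 : m ^ (d - m) * 2 ^ (d - m) ≤ d ^ (d - m) := by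
      rw [← mul_pow]; exact Nat.pow_le_pow_left (by omega) _
    have e4 : (4 : ℕ) ^ (d / 4) = 2 ^ (d / 4) * 2 ^ (d / 4) := by
      rw [show (4 : ℕ) = 2 ^ 2 from rfl, ← pow_mul, two_mul, pow_add]
    calc d.descFactorial m * m ^ (d - m) * 4 ^ (d / 4)
        ≤ d ^ m * m ^ (d - m) * (2 ^ (d - m) * 3 ^ (d / 4)) := by
          rw [e4]
          refine Nat.mul_le_mul (Nat.mul_le_mul e1 le_rfl) (Nat.mul_le_mul ?_ ?_)
          · exact Nat.pow_le_pow_right (by norm_num) h3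
          · exact Nat.pow_le_pow_left (by norm_num) _
      _ = (d ^ m * (m ^ (d - m) * 2 ^ (d - m))) * 3 ^ (d / 4) := by ring
      _ ≤ (d ^ m * d ^ (d - m)) * 3 ^ (d / 4) :=
          Nat.mul_le_mul (Nat.mul_le_mul le_rfl e2) le_rfl
      _ = d ^ d * 3 ^ (d / 4) := by rw [← pow_add, Nat.add_sub_cancel' h2]
  · -- large m : use descFactorial bound
    set q := d / 4 with hq
    have hqm : q ≤ m := by omega
    have hsplit : d.descFactorial m =
        (∏ i ∈ Finset.Ico 0 (m - q), (d - i)) * ∏ i ∈ Finset.Ico (m - q) m, (d - i) := by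
      rw [Nat.descFactorial_eq_prod_range, Finset.range_eq_Ico,
        Finset.prod_Ico_consecutive _ (Nat.zero_le _) (by omega)]
    have e1 : (∏ i ∈ Finset.Ico 0 (m - q), (d - i)) ≤ d ^ (m - q) := by
      calc (∏ i ∈ Finset.Ico 0 (m - q), (d - i)) ≤ ∏ _i ∈ Finset.Ico 0 (m - q), d :=
            Finset.prod_le_prod' fun i _ => Nat.sub_le d i
        _ = d ^ (m - q) := by rw [Finset.prod_const, Nat.card_Ico, Nat.sub_zero]
    have e2 : (∏ i ∈ Finset.Ico (m - q) m, (d - i)) * 4 ^ q ≤ 3 ^ q * d ^ q := by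
      have hcard : (Finset.Ico (m - q) m).card = q := by rw [Nat.card_Ico]; omega
      calc (∏ i ∈ Finset.Ico (m - q) m, (d - i)) * 4 ^ q
          = ∏ i ∈ Finset.Ico (m - q) m, ((d - i) * 4) := by
            rw [Finset.prod_mul_distrib, Finset.prod_const, hcard]
        _ ≤ ∏ _i ∈ Finset.Ico (m - q) m, (3 * d) := by
            refine Finset.prod_le_prod' fun i hi => ?_
            have hi' := Finset.mem_Ico.1 hi
            omega
        _ = (3 * d) ^ q := by rw [Finset.prod_const, hcard]
        _ = 3 ^ q * d ^ q := mul_pow 3 d q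
    calc d.descFactorial m * m ^ (d - m) * 4 ^ q
        = ((∏ i ∈ Finset.Ico 0 (m - q), (d - i)) *
            ((∏ i ∈ Finset.Ico (m - q) m, (d - i)) * 4 ^ q)) * m ^ (d - m) := by
          rw [hsplit]; ring
      _ ≤ (d ^ (m - q) * (3 ^ q * d ^ q)) * d ^ (d - m) :=
          Nat.mul_le_mul (Nat.mul_le_mul e1 e2) (Nat.pow_le_pow_left h2 _)
      _ = 3 ^ q * (d ^ (m - q) * d ^ q * d ^ (d - m)) := by ring
      _ = d ^ d * 3 ^ q := by
          rw [← pow_add, ← pow_add, Nat.sub_add_cancel hqm, Nat.add_sub_cancel' h2, mul_comm]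

theorem quantum_embeddable_extreme_count :
    (∀ d : ℕ, ∑ m ∈ Finset.Icc 1 d, Nat.choose d m * Nat.factorial m * m ^ (d - m)
        = ∑ m ∈ Finset.Icc 1 d, (Nat.factorial d / Nat.factorial (d - m)) * m ^ (d - m)) ∧
    Filter.Tendsto
      (fun d : ℕ =>
        ((∑ m ∈ Finset.Icc 1 d, Nat.choose d m * Nat.factorial m * m ^ (d - m) : ℕ) : ℝ)
          / (d : ℝ) ^ d)
      Filter.atTop (nhds 0) := by
  constructor
  · intro d
    refine Finset.sum_congr rfl fun m hm => ?_
    have hm' := Finset.mem_Icc.1 hm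
    congr 1
    have : Nat.factorial d = Nat.choose d m * Nat.factorial m * Nat.factorial (d - m) :=
      (Nat.choose_mul_factorial_mul_factorial hm'.2).symm
    exact (Nat.div_eq_of_eq_mul_left (Nat.factorial_pos _) this).symm
  · -- asymptotics
    set f : ℕ → ℝ := fun d =>
      ((∑ m ∈ Finset.Icc 1 d, Nat.choose d m * Nat.factorial m * m ^ (d - m) : ℕ) : ℝ)
        / (d : ℝ) ^ d with hf
    have hg : Tendsto (fun d : ℕ => ((4 * (d / 4) + 3 : ℕ) : ℝ) * (3 / 4 : ℝ) ^ (d / 4))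
        atTop (nhds 0) := by
      have h1 : Tendsto (fun k : ℕ => ((4 * k + 3 : ℕ) : ℝ) * (3 / 4 : ℝ) ^ k)
          atTop (nhds 0) := by
        have ha : Tendsto (fun k : ℕ => 4 * ((k : ℝ) * (3 / 4 : ℝ) ^ k)) atTop (nhds 0) := by
          simpa using (tendsto_self_mul_const_pow_of_lt_one (by norm_num) (by norm_num :
            (3:ℝ)/4 < 1)).const_mul 4
        have hb : Tendsto (fun k : ℕ => 3 * ((3 / 4 : ℝ) ^ k)) atTop (nhds 0) := by
          simpa using (tendsto_pow_atTop_nhds_zero_of_lt_one (by norm_num : (0:ℝ) ≤ 3/4)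
            (by norm_num)).const_mul 3
        have := ha.add hb
        simp only [add_zero] at this
        convert this using 2 with k
        push_cast; ring
      have h2 : Tendsto (fun d : ℕ => d / 4) atTop atTop :=
        tendsto_atTop_atTop.2 fun b => ⟨4 * b, fun a ha => by omega⟩
      exact h1.comp h2
    refine squeeze_zero (fun d => ?_) (fun d => ?_) hg
    · exact div_nonneg (Nat.cast_nonneg _) (by positivity)
    · rcases Nat.eq_zero_or_pos d with rfl | hd
      · simp [hf]
      · set q := d / 4 with hq
        set n := ∑ m ∈ Finset.Icc 1 d, Nat.choose d m * Nat.factorial m * m ^ (d - m) with hn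
        have hnat : n * 4 ^ q ≤ d * (d ^ d * 3 ^ q) := by
          calc n * 4 ^ q = ∑ m ∈ Finset.Icc 1 d,
                Nat.choose d m * Nat.factorial m * m ^ (d - m) * 4 ^ q := by
                rw [hn, Finset.sum_mul]
            _ ≤ ∑ _m ∈ Finset.Icc 1 d, d ^ d * 3 ^ q :=
                Finset.sum_le_sum fun m hm => key_term d m (Finset.mem_Icc.1 hm).2
            _ = d * (d ^ d * 3 ^ q) := by rw [Finset.sum_const, Nat.card_Icc]; simp [mul_comm]
        have hdpos : (0 : ℝ) < (d : ℝ) ^ d := by positivity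
        have h4pos : (0 : ℝ) < (4 : ℝ) ^ q := by positivity
        have hcast : (n : ℝ) * 4 ^ q ≤ (d : ℝ) * ((d : ℝ) ^ d * 3 ^ q) := by
          exact_mod_cast Nat.cast_le.2 hnat
        have hkey : (3 / 4 : ℝ) ^ q * 4 ^ q = 3 ^ q := by
          rw [div_pow]; field_simp
        have hstep : f d ≤ (d : ℝ) * (3 / 4 : ℝ) ^ q := by
          have hfd : f d = (n : ℝ) / (d : ℝ) ^ d := rfl
          rw [hfd, div_le_iff₀ hdpos, ← mul_le_mul_iff_of_pos_right h4pos]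
          calc (n : ℝ) * 4 ^ q ≤ (d : ℝ) * ((d : ℝ) ^ d * 3 ^ q) := hcast
            _ = (d : ℝ) * (3 / 4 : ℝ) ^ q * (d : ℝ) ^ d * 4 ^ q := by
                rw [← hkey]; ring
        refine hstep.trans ?_
        have hle : (d : ℝ) ≤ ((4 * (d / 4) + 3 : ℕ) : ℝ) := by
          exact_mod_cast Nat.cast_le.2 (by omega : d ≤ 4 * (d / 4) + 3)
        exact mul_le_mul_of_nonneg_right hle (by positivity)
end

section
/- Let T be a d×d stochastic matrix that is classically embeddable, i.e., T = exp(L·t) for some t ≥ 0 and some real d×d matrix L with non-negative off-diagonal entries and each column summing to 0. Then ∏_{i=1}^d T_{ii} ≥ det T ≥ 0. -/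
open NormedSpace Matrix

variable {d : ℕ}

-- step 1: the determinant as a continuous multilinear map in the rows
noncomputable def detCMM (d : ℕ) : ContinuousMultilinearMap ℝ (fun _ : Fin d => (Fin d → ℝ)) ℝ :=
  MultilinearMap.mkContinuous
    (Matrix.detRowAlternating (n := Fin d) (R := ℝ)).toMultilinearMap (d.factorial)
    (by
      intro m
      have : Matrix.detRowAlternating (Matrix.of m) = Matrix.det (Matrix.of m) := rfl
      calc ‖Matrix.detRowAlternating (R := ℝ) (Matrix.of m)‖
          = ‖∑ σ : Equiv.Perm (Fin d), Equiv.Perm.sign σ • ∏ i, m (σ i) i‖ := by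
            rw [this, Matrix.det_apply]; rfl
        _ ≤ ∑ σ : Equiv.Perm (Fin d), ‖Equiv.Perm.sign σ • ∏ i, m (σ i) i‖ := norm_sum_le _ _
        _ ≤ ∑ _σ : Equiv.Perm (Fin d), ∏ i, ‖m i‖ := by
            refine Finset.sum_le_sum fun σ _ => ?_
            have h1 : ‖Equiv.Perm.sign σ • ∏ i, m (σ i) i‖ = ‖∏ i, m (σ i) i‖ := by
              rcases Int.units_eq_one_or (Equiv.Perm.sign σ) with h | h <;> simp [h]
            rw [h1]
            have h2 : ‖∏ i, m (σ i) i‖ ≤ ∏ i, ‖m (σ i) i‖ := (norm_prod _ _).le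
            refine h2.trans ?_
            have h3 : ∀ i, ‖m (σ i) i‖ ≤ ‖m (σ i)‖ := fun i => norm_le_pi_norm (m (σ i)) i
            calc ∏ i, ‖m (σ i) i‖ ≤ ∏ i, ‖m (σ i)‖ :=
                  Finset.prod_le_prod (fun i _ => norm_nonneg _) (fun i _ => h3 i)
              _ = ∏ i, ‖m i‖ := Equiv.prod_comp σ fun i => ‖m i‖
        _ = (d.factorial : ℝ) * ∏ i, ‖m i‖ := by
            rw [Finset.sum_const, Finset.card_univ, Fintype.card_perm, Fintype.card_fin,
              nsmul_eq_mul])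

lemma detCMM_apply (M : Matrix (Fin d) (Fin d) ℝ) : detCMM d M = M.det := rfl

-- entry evaluation as a continuous linear map w.r.t. the L∞-op norm instances
lemma hasDerivAt_exp_entry (A : Matrix (Fin d) (Fin d) ℝ) (u : ℝ) (i j : Fin d) :
    HasDerivAt (fun s : ℝ => exp (s • A) i j) ((A * exp (u • A)) i j) u := by
  letI : SeminormedRing (Matrix (Fin d) (Fin d) ℝ) := Matrix.linftyOpSemiNormedRing
  letI : NormedRing (Matrix (Fin d) (Fin d) ℝ) := Matrix.linftyOpNormedRing
  letI : NormedAlgebra ℝ (Matrix (Fin d) (Fin d) ℝ) := Matrix.linftyOpNormedAlgebra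
  have hb : ∀ M : Matrix (Fin d) (Fin d) ℝ, ‖M i j‖ ≤ 1 * ‖M‖ := by
    intro M
    have h1 : M i j = (M *ᵥ Pi.single j 1) i := by
      simp [Matrix.mulVec_single]
    rw [h1, one_mul]
    refine (norm_le_pi_norm (M *ᵥ Pi.single j 1) i).trans ?_
    have := Matrix.linfty_opNorm_mulVec M (Pi.single j (1 : ℝ))
    simpa [Pi.norm_single] using this
  let E : Matrix (Fin d) (Fin d) ℝ →L[ℝ] ℝ :=
    LinearMap.mkContinuous
      { toFun := fun M => M i j, map_add' := fun _ _ => rfl, map_smul' := fun _ _ => rfl } 1 hb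
  exact E.hasFDerivAt.comp_hasDerivAt u (hasDerivAt_exp_smul_const' A u)

lemma hasDerivAt_det_exp (A : Matrix (Fin d) (Fin d) ℝ) (u : ℝ) :
    HasDerivAt (fun s : ℝ => (exp (s • A)).det) (A.trace * (exp (u • A)).det) u := by
  classical
  let γ : ℝ → (Fin d → Fin d → ℝ) := fun s => (exp (s • A) : Matrix (Fin d) (Fin d) ℝ)
  let D : Fin d → Fin d → ℝ := (A * exp (u • A) : Matrix (Fin d) (Fin d) ℝ)
  have hPi : HasDerivAt γ D u := by
    rw [hasDerivAt_pi]
    intro i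
    rw [hasDerivAt_pi]
    intro j
    exact hasDerivAt_exp_entry A u i j
  have h := ((detCMM d).hasFDerivAt (γ u)).comp_hasDerivAt u hPi
  have hval : (detCMM d).linearDeriv (γ u) D = A.trace * (exp (u • A)).det := by
    set M : Matrix (Fin d) (Fin d) ℝ := exp (u • A) with hM
    rw [ContinuousMultilinearMap.linearDeriv_apply]
    have hrow : ∀ i : Fin d, Function.update (γ u) i (D i)
        = M.updateRow i (∑ k, A i k • M k) := by
      intro i
      have h2 : D i = ∑ k, A i k • M k := by
        funext j
        simp [D, Matrix.mul_apply, Finset.sum_apply, hM]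
      rw [h2]; rfl
    calc ∑ i, detCMM d (Function.update (γ u) i (D i))
        = ∑ i, (M.updateRow i (∑ k, A i k • M k)).det := by
          refine Finset.sum_congr rfl fun i _ => ?_
          rw [hrow i]; rfl
      _ = ∑ i, A i i • M.det := by
          refine Finset.sum_congr rfl fun i _ => ?_
          exact Matrix.det_updateRow_sum M i (fun k => A i k)
      _ = A.trace * M.det := by
          rw [← Finset.sum_smul]; simp [Matrix.trace, Matrix.diag, smul_eq_mul]
  rw [hval] at h
  exact h

lemma det_exp_smul (A : Matrix (Fin d) (Fin d) ℝ) (u : ℝ) :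
    (exp (u • A)).det = Real.exp (u * A.trace) := by
  set c : ℝ := A.trace with hc
  have hG : ∀ s : ℝ, HasDerivAt (fun s : ℝ => (exp (s • A)).det * Real.exp (-c * s)) 0 s := by
    intro s
    have h1 := hasDerivAt_det_exp A s
    have h2 : HasDerivAt (fun s : ℝ => Real.exp (-c * s)) (Real.exp (-c * s) * -c) s := by
      have h3 : HasDerivAt (fun s : ℝ => -c * s) (-c) s := by
        simpa using (hasDerivAt_id s).const_mul (-c)
      exact h3.exp
    have := h1.mul h2
    refine this.congr_deriv ?_
    rw [hc]; ring
  have hconst : ∀ x y : ℝ, (exp (x • A)).det * Real.exp (-c * x)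
      = (exp (y • A)).det * Real.exp (-c * y) :=
    is_const_of_deriv_eq_zero (fun s => (hG s).differentiableAt) (fun s => (hG s).deriv)
  have h0 := hconst u 0
  simp only [zero_smul, exp_zero, Matrix.det_one, mul_zero, Real.exp_zero, one_mul] at h0
  have := congrArg (fun x => x * Real.exp (c * u)) h0
  simp only [mul_assoc, ← Real.exp_add] at this
  simpa [mul_comm] using this

-- entrywise nonneg powers
lemma pow_entry_nonneg {A : Matrix (Fin d) (Fin d) ℝ} (h : ∀ i j, 0 ≤ A i j) :
    ∀ (n : ℕ) (i j : Fin d), 0 ≤ (A ^ n) i j := by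
  intro n
  induction n with
  | zero => intro i j; by_cases hij : i = j <;> simp [pow_zero, Matrix.one_apply, hij]
  | succ n ih =>
    intro i j
    rw [pow_succ, Matrix.mul_apply]
    exact Finset.sum_nonneg fun k _ => mul_nonneg (ih i k) (h k j)

lemma diag_pow_le {A : Matrix (Fin d) (Fin d) ℝ} (h : ∀ i j, 0 ≤ A i j) :
    ∀ (n : ℕ) (i : Fin d), (A i i) ^ n ≤ (A ^ n) i i := by
  intro n
  induction n with
  | zero => intro i; simp [pow_zero, Matrix.one_apply]
  | succ n ih =>
    intro i
    calc (A i i) ^ (n + 1) = (A i i) ^ n * A i i := by ring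
      _ ≤ (A ^ n) i i * A i i := mul_le_mul_of_nonneg_right (ih i) (h i i)
      _ ≤ ∑ k, (A ^ n) i k * A k i :=
          Finset.single_le_sum (f := fun k => (A ^ n) i k * A k i)
            (fun k _ => mul_nonneg (pow_entry_nonneg h n i k) (h k i)) (Finset.mem_univ i)
      _ = (A ^ (n + 1)) i i := by rw [pow_succ, Matrix.mul_apply]

lemma exp_diag_ge {A : Matrix (Fin d) (Fin d) ℝ} (h : ∀ i j, 0 ≤ A i j) (i : Fin d) :
    Real.exp (A i i) ≤ (exp A) i i := by
  have hsum : HasSum (fun n : ℕ => ((n.factorial : ℝ)⁻¹) • A ^ n) (exp A) := by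
    letI : SeminormedRing (Matrix (Fin d) (Fin d) ℝ) := Matrix.linftyOpSemiNormedRing
    letI : NormedRing (Matrix (Fin d) (Fin d) ℝ) := Matrix.linftyOpNormedRing
    letI : NormedAlgebra ℝ (Matrix (Fin d) (Fin d) ℝ) := Matrix.linftyOpNormedAlgebra
    exact NormedSpace.exp_series_hasSum_exp' A
  have hentry : HasSum (fun n : ℕ => ((n.factorial : ℝ)⁻¹) * (A ^ n) i i) ((exp A) i i) := by
    have h1 := Pi.hasSum.1 (Pi.hasSum.1 hsum i) i
    simpa [Matrix.smul_apply, smul_eq_mul] using h1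
  have hreal : HasSum (fun n : ℕ => ((n.factorial : ℝ)⁻¹) * (A i i) ^ n) (Real.exp (A i i)) := by
    have := NormedSpace.exp_series_hasSum_exp' (𝕂 := ℝ) (A i i)
    simpa [Real.exp_eq_exp_ℝ, smul_eq_mul] using this
  refine hasSum_le (fun n => ?_) hreal hentry
  exact mul_le_mul_of_nonneg_left (diag_pow_le h n i) (by positivity)

theorem goodman_condition_of_classically_embeddable
    (d : ℕ) (L : Matrix (Fin d) (Fin d) ℝ)
    (hoff : ∀ i j, i ≠ j → 0 ≤ L i j)
    (hcol : ∀ j, ∑ i, L i j = 0)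
    (t : ℝ) (ht : 0 ≤ t)
    (T : Matrix (Fin d) (Fin d) ℝ) (hT : T = NormedSpace.exp (t • L)) :
    T.det ≤ ∏ i, T i i ∧ 0 ≤ T.det := by
  classical
  have hdiagL : ∀ i : Fin d, L i i ≤ 0 := by
    intro i
    have h1 : L i i + ∑ k ∈ Finset.univ.erase i, L k i = 0 := by
      rw [Finset.add_sum_erase _ (fun k => L k i) (Finset.mem_univ i)]
      exact hcol i
    have h2 : 0 ≤ ∑ k ∈ Finset.univ.erase i, L k i :=
      Finset.sum_nonneg fun k hk => hoff k i (Finset.ne_of_mem_erase hk)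
    linarith
  set c : ℝ := -(t * L.trace) with hc
  set A : Matrix (Fin d) (Fin d) ℝ := t • L + Matrix.diagonal (fun _ : Fin d => c) with hA
  have hAnn : ∀ i j, 0 ≤ A i j := by
    intro i j
    by_cases hij : i = j
    · subst hij
      have : A i i = t * (L i i - L.trace) := by
        simp [hA, hc, Matrix.add_apply, Matrix.diagonal_apply_eq, Matrix.smul_apply,
          smul_eq_mul]
        ring
      rw [this]
      refine mul_nonneg ht ?_
      have h1 : L.trace = L i i + ∑ k ∈ Finset.univ.erase i, L k k := by
        rw [Matrix.trace]
        exact (Finset.add_sum_erase _ (fun k => L k k) (Finset.mem_univ i)).symm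
      have h2 : ∑ k ∈ Finset.univ.erase i, L k k ≤ 0 :=
        Finset.sum_nonpos fun k _ => hdiagL k
      linarith
    · have : A i j = t * L i j := by
        simp [hA, Matrix.add_apply, Matrix.diagonal_apply_ne _ hij, Matrix.smul_apply,
          smul_eq_mul]
      rw [this]
      exact mul_nonneg ht (hoff i j hij)
  have hsplit : t • L = A + Matrix.diagonal (fun _ : Fin d => -c) := by
    simp [hA]
    ext i j
    by_cases hij : i = j <;>
      simp [Matrix.add_apply, Matrix.diagonal_apply, hij]
  have hcomm : Commute A (Matrix.diagonal (fun _ : Fin d => (-c : ℝ))) := by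
    rw [← Matrix.smul_one_eq_diagonal]
    exact (Commute.one_right A).smul_right _
  have hexp : NormedSpace.exp (t • L)
      = NormedSpace.exp A * Matrix.diagonal (fun _ : Fin d => Real.exp (-c)) := by
    rw [hsplit, Matrix.exp_add_of_commute A _ hcomm, Matrix.exp_diagonal]
    congr 1
    rw [Pi.exp_def]
    funext i
    rw [← Real.exp_eq_exp_ℝ]
  have hTdiag : ∀ i : Fin d, Real.exp (t * L i i) ≤ T i i := by
    intro i
    have h1 : T i i = (NormedSpace.exp A) i i * Real.exp (-c) := by
      rw [hT, hexp, Matrix.mul_diagonal]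
    have h2 : Real.exp (A i i) ≤ (NormedSpace.exp A) i i := exp_diag_ge hAnn i
    have h3 : A i i = t * L i i + c := by
      simp [hA, Matrix.add_apply, Matrix.diagonal_apply_eq, Matrix.smul_apply, smul_eq_mul]
    rw [h1]
    calc Real.exp (t * L i i) = Real.exp (A i i) * Real.exp (-c) := by
          rw [← Real.exp_add, h3]; ring_nf
      _ ≤ (NormedSpace.exp A) i i * Real.exp (-c) :=
          mul_le_mul_of_nonneg_right h2 (Real.exp_pos _).le
  have hdet : T.det = Real.exp (t * L.trace) := by
    rw [hT, det_exp_smul]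
  constructor
  · rw [hdet]
    calc Real.exp (t * L.trace) = ∏ i, Real.exp (t * L i i) := by
          rw [← Real.exp_sum, ← Finset.mul_sum]
          rfl
      _ ≤ ∏ i, T i i :=
          Finset.prod_le_prod (fun i _ => (Real.exp_pos _).le) (fun i _ => hTdiag i)
  · rw [hdet]
    exact (Real.exp_pos _).le
end

section
/- Let ρ and σ be density matrices (positive semidefinite, unit trace) on a finite-dimensional complex Hilbert space. Then the trace distance D(ρ,σ) = ½‖ρ−σ‖₁ satisfies D(ρ,σ) ≥ 1 − Tr(ρσ) − M(ρ)M(σ), where M(ρ) = √(1 − Tr(ρ²)). -/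
open scoped ComplexOrder
open scoped MatrixOrder in
/-- The trace norm (sum of singular values) of a complex matrix. -/
noncomputable def traceNorm {d : ℕ} (X : Matrix (Fin d) (Fin d) ℂ) : ℝ :=
  ((CFC.sqrt (X.conjTranspose * X)).trace).re

/-- Mixedness measure `M(ρ) = √(1 - Tr ρ²)`. -/
noncomputable def mixedness {d : ℕ} (ρ : Matrix (Fin d) (Fin d) ℂ) : ℝ :=
  Real.sqrt (1 - ((ρ * ρ).trace).re)

open Matrix
section helpers
variable {d : ℕ}

lemma trace_conj_unitary {Δ : Matrix (Fin d) (Fin d) ℂ} (hΔ : Δ.IsHermitian)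
    (D : Matrix (Fin d) (Fin d) ℂ) :
    ((hΔ.eigenvectorUnitary : Matrix (Fin d) (Fin d) ℂ) * D *
      star (hΔ.eigenvectorUnitary : Matrix (Fin d) (Fin d) ℂ)).trace = D.trace := by
  rw [Matrix.trace_mul_cycle,
    Matrix.mem_unitaryGroup_iff'.mp (hΔ.eigenvectorUnitary).2, Matrix.one_mul]

lemma trace_eq_sum_eigen {Δ : Matrix (Fin d) (Fin d) ℂ} (hΔ : Δ.IsHermitian) :
    Δ.trace.re = ∑ i, hΔ.eigenvalues i := by
  have : Δ.trace = ∑ i, (hΔ.eigenvalues i : ℂ) := by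
    conv_lhs => rw [hΔ.spectral_theorem, Unitary.conjStarAlgAut_apply]
    rw [trace_conj_unitary hΔ, Matrix.trace_diagonal]
    rfl
  rw [this]
  simp

lemma diag_re_nonneg {M : Matrix (Fin d) (Fin d) ℂ} (hM : M.PosSemidef) (i : Fin d) :
    0 ≤ (M i i).re := by
  have h : (0:ℂ) ≤ M i i := by
    exact hM.diag_nonneg
  exact (Complex.le_def.mp h).1

/-- `Re Tr (A * Δ)` in the eigenbasis of Hermitian `Δ`. -/
lemma trace_mul_eq {Δ : Matrix (Fin d) (Fin d) ℂ} (hΔ : Δ.IsHermitian)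
    (A : Matrix (Fin d) (Fin d) ℂ) :
    ((A * Δ).trace).re = ∑ i, ((star (hΔ.eigenvectorUnitary : Matrix (Fin d) (Fin d) ℂ) * A *
      (hΔ.eigenvectorUnitary : Matrix (Fin d) (Fin d) ℂ)) i i).re * hΔ.eigenvalues i := by
  set V : Matrix (Fin d) (Fin d) ℂ := (hΔ.eigenvectorUnitary : Matrix (Fin d) (Fin d) ℂ)
  have : (A * Δ).trace = ((star V * A * V) * diagonal (RCLike.ofReal ∘ hΔ.eigenvalues)).trace := by
    conv_lhs => rw [hΔ.spectral_theorem, Unitary.conjStarAlgAut_apply]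
    have h1 : V * star V = 1 := Matrix.mem_unitaryGroup_iff.mp (hΔ.eigenvectorUnitary).2
    have key : A * (V * diagonal (RCLike.ofReal ∘ hΔ.eigenvalues) * star V)
        = V * ((star V * A * V) * diagonal (RCLike.ofReal ∘ hΔ.eigenvalues)) * star V := by
      have h2 : V * (star V * A * V * diagonal (RCLike.ofReal ∘ hΔ.eigenvalues)) * star V
          = (V * star V) * (A * (V * diagonal (RCLike.ofReal ∘ hΔ.eigenvalues) * star V)) := by
        simp only [Matrix.mul_assoc]
      rw [h2, h1, Matrix.one_mul]
    rw [key]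
    rw [trace_conj_unitary hΔ]
  rw [this, Matrix.trace]
  rw [Complex.re_sum]
  apply Finset.sum_congr rfl
  intro i _
  simp [Matrix.diag, Matrix.mul_diagonal, Complex.mul_re, Function.comp]

open scoped MatrixOrder in
/-- trace norm of a Hermitian matrix is the sum of the absolute values of eigenvalues. -/
lemma traceNorm_hermitian {Δ : Matrix (Fin d) (Fin d) ℂ} (hΔ : Δ.IsHermitian) :
    traceNorm Δ = ∑ i, |hΔ.eigenvalues i| := by
  set V : Matrix (Fin d) (Fin d) ℂ := (hΔ.eigenvectorUnitary : Matrix (Fin d) (Fin d) ℂ)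
  set B : Matrix (Fin d) (Fin d) ℂ :=
    V * diagonal (RCLike.ofReal ∘ (fun i => |hΔ.eigenvalues i|)) * star V with hBdef
  have hBpsd : B.PosSemidef := by
    apply Matrix.PosSemidef.mul_mul_conjTranspose_same
    · refine Matrix.PosSemidef.diagonal fun i => ?_
      simp only [Function.comp_apply, Pi.zero_apply]
      exact Complex.zero_le_real.mpr (abs_nonneg (hΔ.eigenvalues i))
  have hsq : B ^ 2 = Δᴴ * Δ := by
    have h1 : star V * V = 1 := Matrix.mem_unitaryGroup_iff'.mp (hΔ.eigenvectorUnitary).2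
    rw [hΔ.eq]
    conv_rhs => rw [hΔ.spectral_theorem, Unitary.conjStarAlgAut_apply]
    rw [pow_two, hBdef]
    rw [show V * diagonal (RCLike.ofReal ∘ fun i => |hΔ.eigenvalues i|) * star V *
        (V * diagonal (RCLike.ofReal ∘ fun i => |hΔ.eigenvalues i|) * star V)
        = V * (diagonal (RCLike.ofReal ∘ fun i => |hΔ.eigenvalues i|) * (star V * V) *
          diagonal (RCLike.ofReal ∘ fun i => |hΔ.eigenvalues i|)) * star V by
      simp only [Matrix.mul_assoc]]
    rw [show (V * diagonal (RCLike.ofReal ∘ hΔ.eigenvalues) * star V) *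
        (V * diagonal (RCLike.ofReal ∘ hΔ.eigenvalues) * star V)
        = V * (diagonal (RCLike.ofReal ∘ hΔ.eigenvalues) * (star V * V) *
          diagonal (RCLike.ofReal ∘ hΔ.eigenvalues)) * star V by simp only [Matrix.mul_assoc]]
    rw [h1, Matrix.mul_one, Matrix.mul_one, Matrix.diagonal_mul_diagonal,
      Matrix.diagonal_mul_diagonal]
    congr 1
    funext i
    simp [Function.comp, ← Complex.ofReal_mul, ← sq_abs (hΔ.eigenvalues i), pow_two]
  have hB : B = CFC.sqrt (Δᴴ * Δ) :=
    (CFC.sqrt_unique (by rw [← pow_two]; exact hsq) hBpsd.nonneg).symm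
  rw [traceNorm, ← hB, hBdef, trace_conj_unitary hΔ, Matrix.trace_diagonal]
  simp

end helpers

/-- `Re Tr ρ²` is the sum of squares of eigenvalues. -/
lemma trace_sq_eq {d : ℕ} {ρ : Matrix (Fin d) (Fin d) ℂ} (hρ : ρ.IsHermitian) :
    ((ρ * ρ).trace).re = ∑ i, (hρ.eigenvalues i) ^ 2 := by
  rw [trace_mul_eq hρ ρ]
  apply Finset.sum_congr rfl
  intro i _
  have hD := hρ.conjStarAlgAut_star_eigenvectorUnitary
  simp only [Unitary.conjStarAlgAut_apply, Unitary.coe_star, star_star] at hD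
  rw [hD]
  simp [Matrix.diagonal_apply_eq, pow_two]

lemma trace_sq_le_one {d : ℕ} {ρ : Matrix (Fin d) (Fin d) ℂ} (hρ : ρ.PosSemidef)
    (hρ1 : ρ.trace = 1) : ((ρ * ρ).trace).re ≤ 1 := by
  rw [trace_sq_eq hρ.1]
  have hsum : ∑ i, hρ.1.eigenvalues i = 1 := by
    rw [← trace_eq_sum_eigen hρ.1, hρ1]; simp
  have h0 : ∀ i, 0 ≤ hρ.1.eigenvalues i := hρ.eigenvalues_nonneg
  have h1 : ∀ i, hρ.1.eigenvalues i ≤ 1 := by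
    intro i
    rw [← hsum]
    exact Finset.single_le_sum (fun j _ => h0 j) (Finset.mem_univ i)
  calc ∑ i, (hρ.1.eigenvalues i) ^ 2 ≤ ∑ i, hρ.1.eigenvalues i := by
        apply Finset.sum_le_sum
        intro i _
        nlinarith [h0 i, h1 i]
    _ = 1 := hsum

/-- Key half-bound: `Re Tr (ρ (ρ - σ)) ≤ traceNorm (ρ - σ) / 2`. -/
lemma key_bound {d : ℕ} {ρ σ : Matrix (Fin d) (Fin d) ℂ}
    (hρ : ρ.PosSemidef) (hρ1 : ρ.trace = 1)
    (hσ : σ.PosSemidef) (hσ1 : σ.trace = 1) :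
    ((ρ * (ρ - σ)).trace).re ≤ traceNorm (ρ - σ) / 2 := by
  have hΔ : (ρ - σ).IsHermitian := hρ.1.sub hσ.1
  set V : Matrix (Fin d) (Fin d) ℂ := (hΔ.eigenvectorUnitary : Matrix (Fin d) (Fin d) ℂ) with hV
  set lam : Fin d → ℝ := hΔ.eigenvalues with hlam
  set c : Fin d → ℝ := fun i => ((star V * ρ * V) i i).re with hc
  have hconj : (star V * ρ * V).PosSemidef := by
    have := hρ.conjTranspose_mul_mul_same (B := V)
    rwa [← Matrix.star_eq_conjTranspose] at this
  have hc0 : ∀ i, 0 ≤ c i := fun i => diag_re_nonneg hconj i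
  have hcsum : ∑ i, c i = 1 := by
    have h1 : V * star V = 1 := Matrix.mem_unitaryGroup_iff.mp (hΔ.eigenvectorUnitary).2
    have : (star V * ρ * V).trace = ρ.trace := by
      rw [Matrix.trace_mul_cycle, h1, Matrix.one_mul]
    have h2 : (star V * ρ * V).trace.re = 1 := by rw [this, hρ1]; simp
    rw [← h2, Matrix.trace, Complex.re_sum]
    rfl
  have hc1 : ∀ i, c i ≤ 1 := by
    intro i
    rw [← hcsum]
    exact Finset.single_le_sum (fun j _ => hc0 j) (Finset.mem_univ i)
  have hlamsum : ∑ i, lam i = 0 := by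
    rw [hlam, ← trace_eq_sum_eigen hΔ, Matrix.trace_sub, hρ1, hσ1]
    simp
  rw [trace_mul_eq hΔ ρ, traceNorm_hermitian hΔ]
  have habs : ∑ i, |lam i| = 2 * ∑ i, max (lam i) 0 := by
    have h : ∀ i ∈ Finset.univ, |lam i| = 2 * max (lam i) 0 - lam i := by
      intro i _
      rcases le_total (lam i) 0 with h | h
      · rw [abs_of_nonpos h, max_eq_right h]; ring
      · rw [abs_of_nonneg h, max_eq_left h]; ring
    rw [Finset.sum_congr rfl h, Finset.sum_sub_distrib, hlamsum, sub_zero, ← Finset.mul_sum]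
  have hterm : ∑ i, c i * lam i ≤ ∑ i, max (lam i) 0 := by
    apply Finset.sum_le_sum
    intro i _
    rcases le_total (lam i) 0 with h | h
    · have : c i * lam i ≤ 0 := mul_nonpos_of_nonneg_of_nonpos (hc0 i) h
      exact this.trans (le_max_right _ _)
    · have : c i * lam i ≤ 1 * lam i := mul_le_mul_of_nonneg_right (hc1 i) h
      rw [one_mul] at this
      exact this.trans (le_max_left _ _)
  rw [habs]
  linarith


open scoped MatrixOrder in
lemma traceNorm_neg {d : ℕ} (X : Matrix (Fin d) (Fin d) ℂ) :
    traceNorm (-X) = traceNorm X := by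
  have h : CFC.sqrt (Xᴴ * X)
      = CFC.sqrt ((-X)ᴴ * -X) := by
    rw [conjTranspose_neg, neg_mul_neg]
  rw [traceNorm, traceNorm, h]


theorem trace_distance_lower_bound
    (d : ℕ) (ρ σ : Matrix (Fin d) (Fin d) ℂ)
    (hρ : ρ.PosSemidef) (hρ1 : ρ.trace = 1)
    (hσ : σ.PosSemidef) (hσ1 : σ.trace = 1) :
    1 - ((ρ * σ).trace).re - mixedness ρ * mixedness σ ≤ traceNorm (ρ - σ) / 2 := by
  set a := ((ρ * ρ).trace).re with ha
  set b := ((σ * σ).trace).re with hb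
  set t := ((ρ * σ).trace).re with ht
  have ha1 : a ≤ 1 := trace_sq_le_one hρ hρ1
  have hb1 : b ≤ 1 := trace_sq_le_one hσ hσ1
  have hmρ : mixedness ρ = Real.sqrt (1 - a) := rfl
  have hmσ : mixedness σ = Real.sqrt (1 - b) := rfl
  have hmρ0 : 0 ≤ mixedness ρ := Real.sqrt_nonneg _
  have hmσ0 : 0 ≤ mixedness σ := Real.sqrt_nonneg _
  have hmρsq : mixedness ρ ^ 2 = 1 - a := by
    rw [hmρ, Real.sq_sqrt (by linarith)]
  have hmσsq : mixedness σ ^ 2 = 1 - b := by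
    rw [hmσ, Real.sq_sqrt (by linarith)]
  rcases le_total b a with hab | hab
  · -- mixedness ρ ≤ mixedness σ
    have hm : mixedness ρ ≤ mixedness σ := by
      rw [hmρ, hmσ]
      exact Real.sqrt_le_sqrt (by linarith)
    have hk := key_bound hρ hρ1 hσ hσ1
    have hexp : ((ρ * (ρ - σ)).trace).re = a - t := by
      rw [Matrix.mul_sub, Matrix.trace_sub, Complex.sub_re]
    rw [hexp] at hk
    nlinarith [mul_le_mul_of_nonneg_left hm hmρ0]
  · have hm : mixedness σ ≤ mixedness ρ := by
      rw [hmρ, hmσ]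
      exact Real.sqrt_le_sqrt (by linarith)
    have hk := key_bound hσ hσ1 hρ hρ1
    have hexp : ((σ * (σ - ρ)).trace).re = b - t := by
      rw [Matrix.mul_sub, Matrix.trace_sub, Complex.sub_re, Matrix.trace_mul_comm σ ρ]
    rw [hexp] at hk
    have hTN : traceNorm (σ - ρ) = traceNorm (ρ - σ) := by
      rw [show σ - ρ = -(ρ - σ) by rw [neg_sub], traceNorm_neg]
    rw [hTN] at hk
    nlinarith [mul_le_mul_of_nonneg_left hm hmσ0]
end

section
/- If a qubit quantum channel (completely positive trace-preserving map on 2×2 matrices) maps two distinct pure states to the same pure state |ψ⟩⟨ψ|, then it maps every density matrix to |ψ⟩⟨ψ|. -/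
open scoped ComplexOrder

/-- A quantum channel in dimension `d`: a linear map on `d × d` matrices that is
completely positive (positive semidefinite Choi matrix) and trace-preserving. -/
def IsCPTP {d : ℕ} (E : Matrix (Fin d) (Fin d) ℂ →ₗ[ℂ] Matrix (Fin d) (Fin d) ℂ) : Prop :=
  (Matrix.PosSemidef (Matrix.of fun p q : Fin d × Fin d =>
      E (Matrix.single p.1 q.1 1) p.2 q.2)) ∧
  ∀ X, (E X).trace = X.trace

/-- A pure state: a rank-one orthogonal projection (PSD, idempotent, trace one). -/
def IsPureState {d : ℕ} (P : Matrix (Fin d) (Fin d) ℂ) : Prop :=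
  P.PosSemidef ∧ P.trace = 1 ∧ P * P = P

namespace QCAux

open Matrix Complex

lemma entry_formula {d : ℕ} (E : Matrix (Fin d) (Fin d) ℂ →ₗ[ℂ] Matrix (Fin d) (Fin d) ℂ)
    (X : Matrix (Fin d) (Fin d) ℂ) (p q : Fin d) :
    E X p q = ∑ i, ∑ j, X i j * E (Matrix.single i j 1) p q := by
  conv_lhs => rw [matrix_eq_sum_single X]
  rw [map_sum, Matrix.sum_apply]
  refine Finset.sum_congr rfl fun i _ => ?_
  rw [map_sum, Matrix.sum_apply]
  refine Finset.sum_congr rfl fun j _ => ?_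
  have : Matrix.single i j (X i j) = X i j • Matrix.single i j 1 := by
    rw [smul_single, smul_eq_mul, mul_one]
  rw [this, LinearMap.map_smul, Matrix.smul_apply, smul_eq_mul]

lemma perm5 {d : ℕ} (f : Fin d → Fin d → Fin d → Fin d → Fin d → ℂ) :
    ∑ p, ∑ q, ∑ i, ∑ j, ∑ k, f p q i j k = ∑ k, ∑ i, ∑ p, ∑ j, ∑ q, f p q i j k := by
  calc ∑ p, ∑ q, ∑ i, ∑ j, ∑ k, f p q i j k
      = ∑ p, ∑ q, ∑ i, ∑ k, ∑ j, f p q i j k :=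
        Finset.sum_congr rfl fun p _ => Finset.sum_congr rfl fun q _ =>
          Finset.sum_congr rfl fun i _ => Finset.sum_comm
    _ = ∑ p, ∑ q, ∑ k, ∑ i, ∑ j, f p q i j k :=
        Finset.sum_congr rfl fun p _ => Finset.sum_congr rfl fun q _ => Finset.sum_comm
    _ = ∑ p, ∑ k, ∑ q, ∑ i, ∑ j, f p q i j k :=
        Finset.sum_congr rfl fun p _ => Finset.sum_comm
    _ = ∑ k, ∑ p, ∑ q, ∑ i, ∑ j, f p q i j k := Finset.sum_comm
    _ = ∑ k, ∑ p, ∑ i, ∑ q, ∑ j, f p q i j k :=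
        Finset.sum_congr rfl fun k _ => Finset.sum_congr rfl fun p _ => Finset.sum_comm
    _ = ∑ k, ∑ i, ∑ p, ∑ q, ∑ j, f p q i j k :=
        Finset.sum_congr rfl fun k _ => Finset.sum_comm
    _ = ∑ k, ∑ i, ∑ p, ∑ j, ∑ q, f p q i j k :=
        Finset.sum_congr rfl fun k _ => Finset.sum_congr rfl fun i _ =>
          Finset.sum_congr rfl fun p _ => Finset.sum_comm

lemma choi_pos {d : ℕ} (E : Matrix (Fin d) (Fin d) ℂ →ₗ[ℂ] Matrix (Fin d) (Fin d) ℂ)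
    (hC : (Matrix.of fun p q : Fin d × Fin d =>
      E (Matrix.single p.1 q.1 1) p.2 q.2).PosSemidef)
    {X : Matrix (Fin d) (Fin d) ℂ} (hX : X.PosSemidef) : (E X).PosSemidef := by
  set C : Matrix (Fin d × Fin d) (Fin d × Fin d) ℂ :=
    Matrix.of fun p q : Fin d × Fin d => E (Matrix.single p.1 q.1 1) p.2 q.2 with hCdef
  have hCe : ∀ i j p q, E (Matrix.single i j 1) p q = C (i, p) (j, q) := fun _ _ _ _ => rfl
  refine Matrix.PosSemidef.of_dotProduct_mulVec_nonneg ?_ ?_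
  · ext p q
    rw [conjTranspose_apply, entry_formula, entry_formula]
    push_cast [star_sum]
    rw [Finset.sum_comm]
    refine Finset.sum_congr rfl fun i _ => Finset.sum_congr rfl fun j _ => ?_
    rw [star_mul']
    rw [hCe, hCe, hC.1.apply (i, p) (j, q), hX.1.apply i j]
  · intro y
    open scoped MatrixOrder in obtain ⟨B, hB⟩ := CStarAlgebra.nonneg_iff_eq_star_mul_self.mp hX.nonneg
    have hXe : ∀ i j, X i j = ∑ k, star (B k i) * B k j := by
      intro i j; rw [hB, mul_apply]; simp [conjTranspose_apply]
    have key : star y ⬝ᵥ (E X) *ᵥ y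
        = ∑ k, star (fun ip : Fin d × Fin d => B k ip.1 * y ip.2) ⬝ᵥ
            C *ᵥ (fun ip : Fin d × Fin d => B k ip.1 * y ip.2) := by
      have lhs1 : star y ⬝ᵥ (E X) *ᵥ y
          = ∑ p, ∑ q, ∑ i, ∑ j, ∑ k,
              (star (B k i) * B k j) * C (i, p) (j, q) * (star (y p) * y q) := by
        simp only [dotProduct, mulVec, Pi.star_apply]
        refine Finset.sum_congr rfl fun p _ => ?_
        rw [Finset.mul_sum]
        refine Finset.sum_congr rfl fun q _ => ?_
        rw [entry_formula]
        simp only [Finset.sum_mul, Finset.mul_sum]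
        refine Finset.sum_congr rfl fun i _ => Finset.sum_congr rfl fun j _ => ?_
        rw [hXe, hCe, Finset.sum_mul, Finset.sum_mul, Finset.mul_sum]
        refine Finset.sum_congr rfl fun k _ => by ring
      have rhs1 : ∀ k, star (fun ip : Fin d × Fin d => B k ip.1 * y ip.2) ⬝ᵥ
            C *ᵥ (fun ip : Fin d × Fin d => B k ip.1 * y ip.2)
          = ∑ i, ∑ p, ∑ j, ∑ q,
              (star (B k i) * B k j) * C (i, p) (j, q) * (star (y p) * y q) := by
        intro k
        simp only [dotProduct, mulVec, Pi.star_apply, Fintype.sum_prod_type]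
        refine Finset.sum_congr rfl fun i _ => Finset.sum_congr rfl fun p _ => ?_
        rw [Finset.mul_sum]
        refine Finset.sum_congr rfl fun j _ => ?_
        rw [Finset.mul_sum]
        refine Finset.sum_congr rfl fun q _ => ?_
        simp only [star_mul', star_star]
        ring
      rw [lhs1, perm5]
      exact Finset.sum_congr rfl fun k _ => (rhs1 k).symm
    rw [key]
    exact Finset.sum_nonneg fun k _ => hC.dotProduct_mulVec_nonneg _

lemma proj_squeeze {Q R : Matrix (Fin 2) (Fin 2) ℂ} (hQh : Q.IsHermitian)
    (hQ2 : Q * Q = Q) (hQtr : Q.trace = 1) (hRh : R.IsHermitian)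
    (hRQ : R * (1 - Q) = 0) : R = R.trace • Q := by
  have htr2 : Q 0 0 + Q 1 1 = 1 := by rw [← trace_fin_two]; exact hQtr
  have h00 : Q 0 0 * Q 0 0 + Q 0 1 * Q 1 0 = Q 0 0 := by
    conv_rhs => rw [← hQ2]
    simp [mul_apply, Fin.sum_univ_two]
  have hdetQ : Q.det = 0 := by
    rw [det_fin_two]
    linear_combination Q 0 0 * htr2 - h00
  set B := R - R.trace • Q with hBdef
  have hRtr : star R.trace = R.trace := by
    rw [← Matrix.trace_conjTranspose, hRh.eq]
  have hBh : B.IsHermitian := by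
    rw [Matrix.IsHermitian, hBdef, conjTranspose_sub, conjTranspose_smul, hQh.eq, hRh.eq, hRtr]
  have hBQ : B * Q = B := by
    have hQ1Q : Q * (1 - Q) = 0 := by rw [Matrix.mul_sub, Matrix.mul_one, hQ2, sub_self]
    have h0 : B * (1 - Q) = 0 := by
      rw [hBdef, Matrix.sub_mul, hRQ, Matrix.smul_mul, hQ1Q, smul_zero, zero_sub, neg_eq_zero]
    exact (sub_eq_zero.mp (by rw [← h0, Matrix.mul_sub, Matrix.mul_one])).symm
  have hdetB : B.det = 0 := by
    rw [← hBQ, det_mul, hdetQ, mul_zero]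
  have hBtr : B.trace = 0 := by
    rw [hBdef, trace_sub, trace_smul, hQtr, smul_eq_mul, mul_one, sub_self]
  have hB11 : B 1 1 = -B 0 0 := by
    have h : B 0 0 + B 1 1 = 0 := by rw [← trace_fin_two]; exact hBtr
    linear_combination h
  have hB10 : B 1 0 = star (B 0 1) := (hBh.apply 1 0).symm
  have hkey : B 0 0 ^ 2 + ↑(normSq (B 0 1)) = 0 := by
    have hd : B 0 0 * B 1 1 - B 0 1 * B 1 0 = 0 := by rw [← det_fin_two]; exact hdetB
    rw [hB11, hB10] at hd
    have : B 0 1 * star (B 0 1) = ↑(normSq (B 0 1)) := Complex.mul_conj _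
    linear_combination -hd - this
  have him : (B 0 0).im = 0 := by
    have := hBh.apply 0 0
    exact (Complex.conj_eq_iff_im.mp this)
  have hre : (B 0 0).re ^ 2 + normSq (B 0 1) = 0 := by
    have := congrArg Complex.re hkey
    simpa [pow_two, Complex.mul_re, him] using this
  have h01 : B 0 1 = 0 := by
    have h1 : normSq (B 0 1) = 0 := by nlinarith [sq_nonneg (B 0 0).re, normSq_nonneg (B 0 1)]
    exact normSq_eq_zero.mp h1
  have h00' : B 0 0 = 0 := by
    have h1 : (B 0 0).re = 0 := by nlinarith [sq_nonneg (B 0 0).re, normSq_nonneg (B 0 1)]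
    exact Complex.ext h1 him
  have hB0 : B = 0 := by
    ext i j
    fin_cases i <;> fin_cases j <;>
      simp [h00', h01, hB11, hB10]
  exact sub_eq_zero.mp (hBdef ▸ hB0)

lemma psd2 {M : Matrix (Fin 2) (Fin 2) ℂ} (hM : M.IsHermitian)
    (htr : 0 ≤ M.trace) (hdet : 0 ≤ M.det) : M.PosSemidef := by
  have h10 : M 1 0 = star (M 0 1) := (hM.apply 1 0).symm
  have him0 : (M 0 0).im = 0 := Complex.conj_eq_iff_im.mp (hM.apply 0 0)
  have him1 : (M 1 1).im = 0 := Complex.conj_eq_iff_im.mp (hM.apply 1 1)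
  set a := (M 0 0).re
  set dd := (M 1 1).re
  set b := M 0 1
  have htr' : 0 ≤ a + dd := by
    rw [Complex.nonneg_iff] at htr
    have := htr.1
    simpa [trace_fin_two] using this
  have hdet' : b.re ^ 2 + b.im ^ 2 ≤ a * dd := by
    rw [Complex.nonneg_iff] at hdet
    have := hdet.1
    rw [det_fin_two, h10] at this
    have hre : (M 0 0 * M 1 1 - b * star b).re = a * dd - (b.re ^ 2 + b.im ^ 2) := by
      simp [Complex.sub_re, Complex.mul_re, him0, him1, Complex.conj_re, Complex.conj_im]
      ring
    rw [hre] at this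
    linarith
  have ha : 0 ≤ a := by nlinarith [sq_nonneg b.re, sq_nonneg b.im]
  have hd : 0 ≤ dd := by nlinarith [sq_nonneg b.re, sq_nonneg b.im]
  refine Matrix.PosSemidef.of_dotProduct_mulVec_nonneg ?_ ?_
  · exact hM
  intro x
  have hM00 : M 0 0 = (a : ℂ) := by apply Complex.ext <;> simp [him0, a]
  have hM11 : M 1 1 = (dd : ℂ) := by apply Complex.ext <;> simp [him1, dd]
  have hexp : star x ⬝ᵥ M *ᵥ x
      = ↑a * (star (x 0) * x 0) + ↑dd * (star (x 1) * x 1)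
        + b * (star (x 0) * x 1) + star (b * (star (x 0) * x 1)) := by
    simp only [dotProduct, mulVec, Fin.sum_univ_two, Pi.star_apply, hM00, hM11, h10]
    simp only [star_mul', star_star]
    ring
  rw [hexp, Complex.nonneg_iff]
  set p := (x 0).re; set q := (x 0).im; set r := (x 1).re; set s := (x 1).im
  have hsx0 : star (x 0) * x 0 = ↑(p ^ 2 + q ^ 2) := by
    rw [Complex.star_def, ← Complex.normSq_eq_conj_mul_self]
    simp [Complex.normSq_apply, p, q]; ring_nf
  have hsx1 : star (x 1) * x 1 = ↑(r ^ 2 + s ^ 2) := by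
    rw [Complex.star_def, ← Complex.normSq_eq_conj_mul_self]
    simp [Complex.normSq_apply, r, s]; ring_nf
  constructor
  · have hre2 : (↑a * (star (x 0) * x 0) + ↑dd * (star (x 1) * x 1)
        + b * (star (x 0) * x 1) + star (b * (star (x 0) * x 1))).re
      = a * (p ^ 2 + q ^ 2) + dd * (r ^ 2 + s ^ 2)
        + 2 * (b.re * (p * r + q * s) - b.im * (p * s - q * r)) := by
      rw [hsx0, hsx1]
      simp [Complex.add_re, Complex.mul_re, Complex.mul_im, Complex.conj_re, Complex.conj_im,
        ← Complex.ofReal_pow, Complex.ofReal_re, Complex.ofReal_im]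
      ring
    rw [hre2]
    have hX : (0:ℝ) ≤ p^2+q^2 := by positivity
    have hY : (0:ℝ) ≤ r^2+s^2 := by positivity
    have key : ∀ u v X Y : ℝ, 0 ≤ X → 0 ≤ Y → u^2+v^2 = X*Y →
        0 ≤ a*X + dd*Y + 2*(b.re*u - b.im*v) := by
      intro u v X Y hX hY hXY
      have hc : (b.re*u - b.im*v)^2 + (b.re*v + b.im*u)^2 = (b.re^2+b.im^2)*(X*Y) := by
        rw [← hXY]; ring
      have ht2 : (b.re*u-b.im*v)^2 ≤ (a*X)*(dd*Y) := by
        nlinarith [sq_nonneg (b.re*v+b.im*u), mul_nonneg (sub_nonneg.mpr hdet') (mul_nonneg hX hY)]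
      nlinarith [add_nonneg (mul_nonneg ha hX) (mul_nonneg hd hY), sq_nonneg (a*X - dd*Y), ht2]
    exact key (p*r+q*s) (p*s-q*r) (p^2+q^2) (r^2+s^2) hX hY (by ring)
  · have : (↑a * (star (x 0) * x 0) + ↑dd * (star (x 1) * x 1)
        + b * (star (x 0) * x 1) + star (b * (star (x 0) * x 1))).im = 0 := by
      rw [hsx0, hsx1]
      simp [Complex.add_im, Complex.mul_im, Complex.mul_re, Complex.conj_re, Complex.conj_im,
        ← Complex.ofReal_pow, Complex.ofReal_re, Complex.ofReal_im]
      ring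
    rw [this]

lemma psd_smul_real {n : Type*} [Fintype n] {A : Matrix n n ℂ} (hA : A.PosSemidef)
    {c : ℝ} (hc : 0 ≤ c) : ((c : ℂ) • A).PosSemidef := by
  refine Matrix.PosSemidef.of_dotProduct_mulVec_nonneg ?_ ?_
  · rw [Matrix.IsHermitian, conjTranspose_smul, hA.1.eq]
    congr 1
    simp
  · intro x
    rw [smul_mulVec, dotProduct_smul, smul_eq_mul]
    exact mul_nonneg (by simp [Complex.nonneg_iff, hc]) (hA.dotProduct_mulVec_nonneg x)

lemma psd_det_nonneg {n : Type*} [Fintype n] [DecidableEq n] {A : Matrix n n ℂ}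
    (hA : A.PosSemidef) : 0 ≤ A.det := by
  rw [hA.1.det_eq_prod_eigenvalues]
  refine Finset.prod_nonneg fun i _ => ?_
  have := hA.eigenvalues_nonneg i
  rw [Complex.nonneg_iff]
  simp [this]

lemma mat_eq_zero_of_mulVec {n : Type*} [Fintype n] [DecidableEq n] {M : Matrix n n ℂ}
    (h : ∀ v, M *ᵥ v = 0) : M = 0 := by
  ext i j
  simpa [mulVec_single] using congrFun (h (Pi.single j 1)) i

lemma psd_diag_re {n : Type*} [Fintype n] [DecidableEq n] {A : Matrix n n ℂ}
    (hA : A.PosSemidef) (i : n) : 0 ≤ (A i i).re ∧ (A i i).im = 0 := by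
  have h := hA.dotProduct_mulVec_nonneg (Pi.single i 1)
  have he : star (Pi.single i 1 : n → ℂ) ⬝ᵥ A *ᵥ (Pi.single i 1) = A i i := by
    rw [mulVec_single]
    simp [dotProduct, Pi.single_apply]
  rw [he, Complex.nonneg_iff] at h
  exact ⟨h.1, h.2.symm⟩

lemma pure_determined_by_kernel {P : Matrix (Fin 2) (Fin 2) ℂ}
    (hPh : P.IsHermitian) (hPtr : P.trace = 1)
    {x : Fin 2 → ℂ} (hx : x ≠ 0) (hPx : P *ᵥ x = 0) :
    P = 1 - (star x ⬝ᵥ x)⁻¹ • vecMulVec x (star x) := by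
  set s : ℂ := star x ⬝ᵥ x with hsdef
  have hs : s ≠ 0 := fun h => hx (dotProduct_star_self_eq_zero.mp h)
  have hss : star s = s := by
    simp [hsdef, dotProduct, Fin.sum_univ_two, star_add, star_mul']
    ring
  set M : Matrix (Fin 2) (Fin 2) ℂ := vecMulVec x (star x) with hMdef
  have hMh : M.IsHermitian := by
    ext i j
    simp [hMdef, conjTranspose_apply, vecMulVec_apply, star_mul']
    ring
  have hMM : M * M = s • M := by
    ext i j
    simp [hMdef, mul_apply, vecMulVec_apply, Fin.sum_univ_two, hsdef, dotProduct, Matrix.smul_apply]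
    ring
  have htrM : M.trace = s := by
    simp [hMdef, trace_fin_two, vecMulVec_apply, hsdef, dotProduct, Fin.sum_univ_two]
    ring
  set N : Matrix (Fin 2) (Fin 2) ℂ := 1 - s⁻¹ • M with hNdef
  have hNh : N.IsHermitian := by
    rw [Matrix.IsHermitian, hNdef, conjTranspose_sub, conjTranspose_smul, conjTranspose_one,
      hMh.eq, star_inv₀, hss]
  have hNN : N * N = N := by
    rw [hNdef]
    simp only [Matrix.sub_mul, Matrix.mul_sub, Matrix.mul_one, Matrix.one_mul, Matrix.smul_mul,
      mul_smul_comm, hMM, smul_smul]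
    rw [inv_mul_cancel₀ hs]
    simp
  have htrN : N.trace = 1 := by
    rw [hNdef, trace_sub, trace_smul, htrM, smul_eq_mul, inv_mul_cancel₀ hs, trace_one]
    norm_num
  have hPN : P * (1 - N) = 0 := by
    have h1N : (1 : Matrix (Fin 2) (Fin 2) ℂ) - N = s⁻¹ • M := by rw [hNdef]; abel
    rw [h1N, Matrix.mul_smul]
    have hPM : P * M = 0 := by
      ext i j
      have h := congrFun hPx i
      simp only [mulVec, dotProduct, Fin.sum_univ_two, Pi.zero_apply] at h
      simp [hMdef, mul_apply, vecMulVec_apply, Fin.sum_univ_two, Complex.star_def]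
      linear_combination (starRingEnd ℂ) (x j) * h
    rw [hPM, smul_zero]
  have := proj_squeeze hNh hNN htrN hPh hPN
  rw [hPtr, one_smul] at this
  rw [this, hNdef]

end QCAux

open Matrix Complex QCAux in
theorem qubit_channel_contracts_of_two_pure_to_pure
    (E : Matrix (Fin 2) (Fin 2) ℂ →ₗ[ℂ] Matrix (Fin 2) (Fin 2) ℂ) (hE : IsCPTP E)
    (P₁ P₂ Q : Matrix (Fin 2) (Fin 2) ℂ)
    (hP₁ : IsPureState P₁) (hP₂ : IsPureState P₂) (hQ : IsPureState Q)
    (hne : P₁ ≠ P₂) (h1 : E P₁ = Q) (h2 : E P₂ = Q) :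
    ∀ ρ : Matrix (Fin 2) (Fin 2) ℂ, ρ.PosSemidef → ρ.trace = 1 → E ρ = Q := by
  intro ρ hρ hρtr
  obtain ⟨hChoi, hTP⟩ := hE
  obtain ⟨hP₁psd, hP₁tr, hP₁2⟩ := hP₁
  obtain ⟨hP₂psd, hP₂tr, hP₂2⟩ := hP₂
  obtain ⟨hQpsd, hQtr, hQ2⟩ := hQ
  set σ := P₁ + P₂ with hσdef
  have hσpsd : σ.PosSemidef := hP₁psd.add hP₂psd
  have hσtr : σ.trace = 2 := by rw [hσdef, trace_add, hP₁tr, hP₂tr]; norm_num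
  have hdetσ : σ.det ≠ 0 := by
    intro h
    obtain ⟨x, hx0, hσx⟩ := (Matrix.exists_mulVec_eq_zero_iff).mpr h
    have hq1 : star x ⬝ᵥ P₁ *ᵥ x + star x ⬝ᵥ P₂ *ᵥ x = 0 := by
      have h0 : star x ⬝ᵥ σ *ᵥ x = 0 := by rw [hσx, dotProduct_zero]
      rw [hσdef, add_mulVec, dotProduct_add] at h0
      exact h0
    have hq2 : star x ⬝ᵥ P₁ *ᵥ x = 0 := by
      have hle : star x ⬝ᵥ P₁ *ᵥ x ≤ 0 := by
        have := hP₂psd.dotProduct_mulVec_nonneg x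
        calc star x ⬝ᵥ P₁ *ᵥ x ≤ star x ⬝ᵥ P₁ *ᵥ x + star x ⬝ᵥ P₂ *ᵥ x := le_add_of_nonneg_right this
        _ = 0 := hq1
      exact le_antisymm hle (hP₁psd.dotProduct_mulVec_nonneg x)
    have hq3 : star x ⬝ᵥ P₂ *ᵥ x = 0 := by
      rw [hq2, zero_add] at hq1
      exact hq1
    have hP1x := (hP₁psd.dotProduct_mulVec_zero_iff x).mp hq2
    have hP2x := (hP₂psd.dotProduct_mulVec_zero_iff x).mp hq3
    exact hne ((pure_determined_by_kernel hP₁psd.1 hP₁tr hx0 hP1x).trans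
      (pure_determined_by_kernel hP₂psd.1 hP₂tr hx0 hP2x).symm)
  have hdet0 : 0 ≤ σ.det := psd_det_nonneg hσpsd
  set r : ℝ := σ.det.re with hrdef
  have hσdetr : σ.det = (r : ℂ) := by
    rw [Complex.nonneg_iff] at hdet0
    exact Complex.ext rfl hdet0.2.symm
  have hrne : r ≠ 0 := by
    intro h
    apply hdetσ
    rw [hσdetr, h]
    norm_num
  have hrnn : (0:ℝ) ≤ r := (Complex.nonneg_iff.mp hdet0).1
  have hr0 : 0 < r := lt_of_le_of_ne hrnn (Ne.symm hrne)
  have hr2 : r ≤ 2 := by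
    have hσh := hσpsd.1
    have h00 := psd_diag_re hσpsd 0
    have h11 := psd_diag_re hσpsd 1
    have h10 : σ 1 0 = star (σ 0 1) := (hσh.apply 1 0).symm
    have htrre : (σ 0 0).re + (σ 1 1).re = 2 := by
      have := congrArg Complex.re hσtr
      simpa [trace_fin_two] using this
    have hdre : r = (σ 0 0).re * (σ 1 1).re - normSq (σ 0 1) := by
      rw [hrdef, det_fin_two, h10]
      simp [Complex.sub_re, Complex.mul_re, h00.2, h11.2, Complex.normSq_apply,
        Complex.conj_re, Complex.conj_im]
    nlinarith [h00.1, h11.1, normSq_nonneg (σ 0 1), sq_nonneg ((σ 0 0).re - (σ 1 1).re)]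
  set ε : ℝ := r / 2 with hεdef
  have hε : 0 < ε := by positivity
  have hT1 : (σ - (ε : ℂ) • 1).PosSemidef := by
    apply psd2
    · rw [Matrix.IsHermitian, conjTranspose_sub, hσpsd.1.eq, conjTranspose_smul,
        conjTranspose_one]
      congr 2
      simp
    · rw [trace_sub, trace_smul, hσtr, trace_one]
      simp only [Fintype.card_fin, Nat.cast_ofNat, smul_eq_mul]
      have : (2 : ℂ) - (ε : ℂ) * 2 = ((2 - r : ℝ) : ℂ) := by
        push_cast [hεdef]
        ring
      rw [this, Complex.nonneg_iff]
      constructor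
      · simp only [Complex.ofReal_re]
        linarith
      · simp
    · have hdd : (σ - (ε : ℂ) • 1).det = σ.det - (ε : ℂ) * σ.trace + (ε : ℂ) ^ 2 := by
        simp [det_fin_two, trace_fin_two, Matrix.sub_apply, Matrix.smul_apply, one_apply]
        ring
      rw [hdd, hσdetr, hσtr]
      have : (r : ℂ) - (ε : ℂ) * 2 + (ε : ℂ) ^ 2 = ((ε ^ 2 : ℝ) : ℂ) := by
        push_cast [hεdef]
        ring
      rw [this, Complex.nonneg_iff]
      constructor
      · simp [← Complex.ofReal_pow, sq_nonneg]
      · simp [← Complex.ofReal_pow]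
  have hT2 : ((1 : Matrix (Fin 2) (Fin 2) ℂ) - ρ).PosSemidef := by
    apply psd2
    · rw [Matrix.IsHermitian, conjTranspose_sub, hρ.1.eq, conjTranspose_one]
    · rw [trace_sub, hρtr, trace_one]
      simp only [Fintype.card_fin, Nat.cast_ofNat]
      rw [show ((2 : ℂ) - 1) = ((1:ℝ) : ℂ) by norm_num, Complex.nonneg_iff]
      simp
    · have hdd : ((1 : Matrix (Fin 2) (Fin 2) ℂ) - ρ).det = 1 - ρ.trace + ρ.det := by
        simp [det_fin_two, trace_fin_two, Matrix.sub_apply, one_apply]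
        ring
      rw [hdd, hρtr]
      simpa using psd_det_nonneg hρ
  have hD : ((σ - (ε : ℂ) • 1) + (ε : ℂ) • ((1 : Matrix (Fin 2) (Fin 2) ℂ) - ρ)).PosSemidef :=
    hT1.add (psd_smul_real hT2 hε.le)
  have hDeq : (σ - (ε : ℂ) • 1) + (ε : ℂ) • ((1 : Matrix (Fin 2) (Fin 2) ℂ) - ρ)
      = σ - (ε : ℂ) • ρ := by
    rw [smul_sub]
    abel
  rw [hDeq] at hD
  have hED : (E (σ - (ε : ℂ) • ρ)).PosSemidef := choi_pos E hChoi hD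
  have hEDeq : E (σ - (ε : ℂ) • ρ) = Q + Q - (ε : ℂ) • E ρ := by
    rw [map_sub, _root_.map_smul, hσdef, map_add, h1, h2]
  rw [hEDeq] at hED
  set A : Matrix (Fin 2) (Fin 2) ℂ := ((ε / 2 : ℝ) : ℂ) • E ρ with hAdef
  have hQA : Q - A = ((1 / 2 : ℝ) : ℂ) • (Q + Q - (ε : ℂ) • E ρ) := by
    rw [hAdef, smul_sub, smul_add, smul_smul]
    push_cast
    match_scalars <;> ring
  have hQApsd : (Q - A).PosSemidef := by
    rw [hQA]
    exact psd_smul_real hED (by norm_num)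
  have hApsd : A.PosSemidef := psd_smul_real (choi_pos E hChoi hρ) (by positivity)
  have hA1Q : A * (1 - Q) = 0 := by
    apply mat_eq_zero_of_mulVec
    intro v
    rw [← mulVec_mulVec]
    set w := (1 - Q) *ᵥ v with hwdef
    have hQw : Q *ᵥ w = 0 := by
      rw [hwdef, mulVec_mulVec, Matrix.mul_sub, Matrix.mul_one, hQ2, sub_self, zero_mulVec]
    have hge : 0 ≤ star w ⬝ᵥ (Q - A) *ᵥ w := hQApsd.dotProduct_mulVec_nonneg w
    rw [sub_mulVec, dotProduct_sub, hQw, dotProduct_zero, zero_sub] at hge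
    have hle : star w ⬝ᵥ A *ᵥ w ≤ 0 := neg_nonneg.mp hge
    have h0 : star w ⬝ᵥ A *ᵥ w = 0 := le_antisymm hle (hApsd.dotProduct_mulVec_nonneg w)
    exact (hApsd.dotProduct_mulVec_zero_iff w).mp h0
  have hfin := proj_squeeze hQpsd.1 hQ2 hQtr hApsd.1 hA1Q
  have hAtr : A.trace = ((ε / 2 : ℝ) : ℂ) := by
    rw [hAdef, trace_smul, hTP, hρtr, smul_eq_mul, mul_one]
  rw [hAtr, hAdef] at hfin
  have hc0 : ((ε / 2 : ℝ) : ℂ) ≠ 0 := by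
    simp only [ne_eq, Complex.ofReal_eq_zero]
    positivity
  exact smul_right_injective _ hc0 hfin
end

section
/- Let E be a qubit quantum channel and ρ a full-rank (positive definite) 2×2 density matrix. If E(ρ) is a pure state |ψ⟩⟨ψ|, then E(σ) = |ψ⟩⟨ψ| for every density matrix σ. -/
open scoped ComplexOrder

open Matrix

private lemma aux_minor (Q : Matrix (Fin 2) (Fin 2) ℂ) (h : Q.det = 0) (i j k l : Fin 2) :
    Q i k * Q l j = Q l k * Q i j := by
  rw [Matrix.det_fin_two] at h
  have h2 : ∀ m : Fin 2, m = 0 ∨ m = 1 := by decide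
  rcases h2 i with rfl | rfl <;> rcases h2 j with rfl | rfl <;>
    rcases h2 k with rfl | rfl <;> rcases h2 l with rfl | rfl <;>
    first
    | ring1
    | (linear_combination h)
    | (linear_combination -h)

private lemma aux_rankone (Q : Matrix (Fin 2) (Fin 2) ℂ) (h : Q.det = 0)
    (M : Matrix (Fin 2) (Fin 2) ℂ) : Q * M * Q = (M * Q).trace • Q := by
  ext i j
  have e : ∀ k l : Fin 2, Q i k * M k l * Q l j = M k l * Q l k * Q i j := fun k l => by
    linear_combination M k l * aux_minor Q h i j k l
  simp only [Matrix.mul_apply, Matrix.trace, Matrix.diag, Matrix.smul_apply, smul_eq_mul,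
    Fin.sum_univ_two]
  linear_combination e 0 0 + e 0 1 + e 1 0 + e 1 1

private lemma aux_det_zero (Q : Matrix (Fin 2) (Fin 2) ℂ) (hQ2 : Q * Q = Q) (hQt : Q.trace = 1) :
    Q.det = 0 := by
  have h : Q.det * (Q.det - 1) = 0 := by
    have : Q.det * Q.det = Q.det := by rw [← Matrix.det_mul, hQ2]
    linear_combination this
  rcases mul_eq_zero.mp h with h0 | h1
  · exact h0
  · exfalso
    have hdet : IsUnit Q.det := by rw [sub_eq_zero.mp h1]; exact isUnit_one
    have hinv : Q⁻¹ * Q = 1 := Matrix.nonsing_inv_mul Q hdet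
    have hQ1 : Q = 1 := by
      calc Q = (Q⁻¹ * Q) * Q := by rw [hinv, one_mul]
        _ = Q⁻¹ * (Q * Q) := by rw [mul_assoc]
        _ = 1 := by rw [hQ2, hinv]
    rw [hQ1, Matrix.trace_one] at hQt
    norm_num at hQt

private lemma aux_psd_sum {ι : Type*} (s : Finset ι) (f : ι → Matrix (Fin 2) (Fin 2) ℂ)
    (h : ∀ i ∈ s, (f i).PosSemidef) : (∑ i ∈ s, f i).PosSemidef := by
  classical
  induction s using Finset.induction_on with
  | empty => simpa using Matrix.PosSemidef.zero
  | insert _ _ hx ih =>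
      rw [Finset.sum_insert hx]
      exact (h _ (Finset.mem_insert_self _ _)).add
        (ih fun i hi => h i (Finset.mem_insert_of_mem hi))

private lemma aux_psd_smul {M : Matrix (Fin 2) (Fin 2) ℂ} (hM : M.PosSemidef) {c : ℝ} (hc : 0 ≤ c) :
    ((c : ℂ) • M).PosSemidef := by
  refine Matrix.PosSemidef.of_dotProduct_mulVec_nonneg ?_ ?_
  · unfold Matrix.IsHermitian
    rw [Matrix.conjTranspose_smul, hM.1.eq]
    norm_num
  · intro x
    rw [Matrix.smul_mulVec, dotProduct_smul, smul_eq_mul]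
    exact mul_nonneg (Complex.zero_le_real.mpr hc) (hM.dotProduct_mulVec_nonneg x)

private lemma aux_spec_decomp (A : Matrix (Fin 2) (Fin 2) ℂ) (hH : A.IsHermitian) (c : ℝ) :
    A - (c : ℂ) • 1 = (hH.eigenvectorUnitary : Matrix (Fin 2) (Fin 2) ℂ) *
      Matrix.diagonal (fun i => ((hH.eigenvalues i - c : ℝ) : ℂ)) *
      ((hH.eigenvectorUnitary : Matrix (Fin 2) (Fin 2) ℂ))ᴴ := by
  set U : Matrix (Fin 2) (Fin 2) ℂ := (hH.eigenvectorUnitary : Matrix (Fin 2) (Fin 2) ℂ)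
  have hU : U * Uᴴ = 1 := by
    rw [← Matrix.star_eq_conjTranspose]
    exact Matrix.mem_unitaryGroup_iff.mp hH.eigenvectorUnitary.2
  have h1 : (c : ℂ) • (1 : Matrix (Fin 2) (Fin 2) ℂ) = U * ((c : ℂ) • 1) * Uᴴ := by
    rw [Matrix.mul_smul, Matrix.smul_mul, mul_one, hU]
  have hd : Matrix.diagonal (RCLike.ofReal ∘ hH.eigenvalues) - (c : ℂ) • 1
      = Matrix.diagonal (fun i => ((hH.eigenvalues i - c : ℝ) : ℂ)) := by
    rw [Matrix.smul_one_eq_diagonal, Matrix.diagonal_sub]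
    funext i
    push_cast
    simp [Function.comp]
  conv_lhs => rw [hH.spectral_theorem, Unitary.conjStarAlgAut_apply, h1]
  rw [Matrix.star_eq_conjTranspose, ← Matrix.sub_mul, ← Matrix.mul_sub, hd]

private lemma aux_psd_of_eigs (A : Matrix (Fin 2) (Fin 2) ℂ) (hH : A.IsHermitian) (c : ℝ)
    (h : ∀ i, c ≤ hH.eigenvalues i) : (A - (c : ℂ) • 1).PosSemidef := by
  rw [aux_spec_decomp A hH c]
  exact (Matrix.posSemidef_diagonal_iff.mpr fun i =>
    Complex.zero_le_real.mpr (by linarith [h i])).mul_mul_conjTranspose_same _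

private lemma aux_psd_of_eigs' (A : Matrix (Fin 2) (Fin 2) ℂ) (hH : A.IsHermitian) (c : ℝ)
    (h : ∀ i, hH.eigenvalues i ≤ c) : ((c : ℂ) • 1 - A).PosSemidef := by
  have hd := aux_spec_decomp A hH c
  have h2 : (c : ℂ) • (1 : Matrix (Fin 2) (Fin 2) ℂ) - A =
      (hH.eigenvectorUnitary : Matrix (Fin 2) (Fin 2) ℂ) *
      Matrix.diagonal (fun i => ((c - hH.eigenvalues i : ℝ) : ℂ)) *
      ((hH.eigenvectorUnitary : Matrix (Fin 2) (Fin 2) ℂ))ᴴ := by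
    have hfun : Matrix.diagonal (fun i => ((c - hH.eigenvalues i : ℝ) : ℂ))
        = -Matrix.diagonal (fun i => ((hH.eigenvalues i - c : ℝ) : ℂ)) := by
      ext i j
      rcases eq_or_ne i j with rfl | hij
      · simp only [Matrix.diagonal_apply_eq, Matrix.neg_apply]
        push_cast
        ring
      · simp [Matrix.diagonal_apply_ne _ hij]
    rw [show (c : ℂ) • (1 : Matrix (Fin 2) (Fin 2) ℂ) - A = -(A - (c : ℂ) • 1) by
      rw [neg_sub], hd, hfun, Matrix.mul_neg, Matrix.neg_mul]
  rw [h2]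
  exact (Matrix.posSemidef_diagonal_iff.mpr fun i =>
    Complex.zero_le_real.mpr (by linarith [h i])).mul_mul_conjTranspose_same _

private lemma aux_trace_eq_sum (A : Matrix (Fin 2) (Fin 2) ℂ) (hH : A.IsHermitian) :
    A.trace = ((hH.eigenvalues 0 : ℂ) + (hH.eigenvalues 1 : ℂ)) := by
  have hU : (hH.eigenvectorUnitary : Matrix (Fin 2) (Fin 2) ℂ)ᴴ *
      (hH.eigenvectorUnitary : Matrix (Fin 2) (Fin 2) ℂ) = 1 := by
    rw [← Matrix.star_eq_conjTranspose]
    exact Matrix.mem_unitaryGroup_iff'.mp hH.eigenvectorUnitary.2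
  conv_lhs => rw [hH.spectral_theorem, Unitary.conjStarAlgAut_apply]
  rw [Matrix.star_eq_conjTranspose, Matrix.trace_mul_cycle, hU, one_mul, Matrix.trace_diagonal]
  simp [Fin.sum_univ_two]

private lemma aux_psd_decomp {n : Type*} [Fintype n] [DecidableEq n] {A : Matrix n n ℂ}
    (h : A.PosSemidef) : ∃ B : Matrix n n ℂ, A = Bᴴ * B := by
  open scoped MatrixOrder in
  obtain ⟨X, hX, -, hXA⟩ :=
    CFC.exists_sqrt_of_isSelfAdjoint_of_quasispectrumRestricts h.isHermitian
      (QuasispectrumRestricts.nnreal_of_nonneg h.nonneg)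
  exact ⟨X, by rw [← hXA, ← Matrix.star_eq_conjTranspose, hX.star_eq]⟩

private lemma aux_E_psd (E : Matrix (Fin 2) (Fin 2) ℂ →ₗ[ℂ] Matrix (Fin 2) (Fin 2) ℂ)
    (hE : IsCPTP E) {σ : Matrix (Fin 2) (Fin 2) ℂ} (hσ : σ.PosSemidef) :
    (E σ).PosSemidef := by
  obtain ⟨W, hW⟩ := aux_psd_decomp hE.1
  set K : Fin 2 × Fin 2 → Matrix (Fin 2) (Fin 2) ℂ :=
    fun m => Matrix.of fun p2 p1 => star (W m (p1, p2)) with hK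
  have hC' : ∀ p1 q1 p2 q2 : Fin 2,
      E (Matrix.single p1 q1 1) p2 q2 = (Wᴴ * W) ((p1, p2)) ((q1, q2)) := by
    intro p1 q1 p2 q2
    have := congrFun (congrFun hW (p1, p2)) (q1, q2)
    simpa using this
  have h0 : E σ = ∑ p : Fin 2, ∑ q : Fin 2, σ p q • E (Matrix.single p q 1) := by
    conv_lhs => rw [Matrix.matrix_eq_sum_single σ]
    rw [map_sum]
    refine Finset.sum_congr rfl fun p _ => ?_
    rw [map_sum]
    refine Finset.sum_congr rfl fun q _ => ?_
    rw [← _root_.map_smul, Matrix.smul_single, smul_eq_mul, mul_one]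
  have hkraus : E σ = ∑ m : Fin 2 × Fin 2, (K m) * σ * (K m)ᴴ := by
    rw [h0]
    ext p2 q2
    simp only [Matrix.sum_apply, Matrix.add_apply, Matrix.smul_apply, smul_eq_mul, hC',
      Matrix.mul_apply, Matrix.conjTranspose_apply, Matrix.of_apply, star_star, hK,
      Fintype.sum_prod_type, Fin.sum_univ_two]
    ring
  rw [hkraus]
  exact aux_psd_sum _ _ fun m _ => hσ.mul_mul_conjTranspose_same (K m)

theorem qubit_channel_contracts_of_full_rank_to_pure
    (E : Matrix (Fin 2) (Fin 2) ℂ →ₗ[ℂ] Matrix (Fin 2) (Fin 2) ℂ) (hE : IsCPTP E)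
    (ρ : Matrix (Fin 2) (Fin 2) ℂ) (hρ : ρ.PosDef) (hρ1 : ρ.trace = 1)
    (Q : Matrix (Fin 2) (Fin 2) ℂ) (hQ : IsPureState Q) (hρQ : E ρ = Q) :
    ∀ σ : Matrix (Fin 2) (Fin 2) ℂ, σ.PosSemidef → σ.trace = 1 → E σ = Q := by
  intro σ hσ hσ1
  have h2 : ∀ m : Fin 2, m = 0 ∨ m = 1 := by decide
  -- choose ε
  set μ : ℝ := min (hρ.1.eigenvalues 0) (hρ.1.eigenvalues 1) with hμ
  have hμpos : 0 < μ := lt_min (hρ.eigenvalues_pos 0) (hρ.eigenvalues_pos 1)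
  set ε : ℝ := min μ (1/2) with hεdef
  have hεpos : 0 < ε := lt_min hμpos (by norm_num)
  have hεlt1 : ε < 1 := lt_of_le_of_lt (min_le_right _ _) (by norm_num)
  -- ρ - ε•1 is PSD
  have hρε : (ρ - (ε : ℂ) • 1).PosSemidef := by
    refine aux_psd_of_eigs ρ hρ.1 ε fun i => ?_
    rcases h2 i with rfl | rfl
    · exact le_trans (min_le_left _ _) (min_le_left _ _)
    · exact le_trans (min_le_left _ _) (min_le_right _ _)
  -- 1 - σ is PSD
  have h1σ : ((1 : Matrix (Fin 2) (Fin 2) ℂ) - σ).PosSemidef := by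
    have htr := aux_trace_eq_sum σ hσ.1
    rw [hσ1] at htr
    have htr' : hσ.1.eigenvalues 0 + hσ.1.eigenvalues 1 = 1 := by
      have : (((hσ.1.eigenvalues 0 + hσ.1.eigenvalues 1 : ℝ)) : ℂ) = ((1 : ℝ) : ℂ) := by
        push_cast
        rw [← htr]
      exact_mod_cast this
    have hnn0 := hσ.eigenvalues_nonneg 0
    have hnn1 := hσ.eigenvalues_nonneg 1
    have := aux_psd_of_eigs' σ hσ.1 1 fun i => by
      rcases h2 i with rfl | rfl <;> linarith
    simpa using this
  -- ρ - ε•σ is PSD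
  have hPSD : (ρ - (ε : ℂ) • σ).PosSemidef := by
    have := hρε.add (aux_psd_smul h1σ hεpos.le)
    have hre : (ρ - (ε : ℂ) • 1) + (ε : ℂ) • ((1 : Matrix (Fin 2) (Fin 2) ℂ) - σ)
        = ρ - (ε : ℂ) • σ := by
      rw [smul_sub]
      abel
    rwa [hre] at this
  -- the complementary state τ
  set τ : Matrix (Fin 2) (Fin 2) ℂ := (((1 - ε : ℝ)⁻¹ : ℝ) : ℂ) • (ρ - (ε : ℂ) • σ) with hτdef
  have h1εpos : (0 : ℝ) < 1 - ε := by linarith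
  have hτpsd : τ.PosSemidef := aux_psd_smul hPSD (inv_nonneg.mpr h1εpos.le)
  have hτtr : τ.trace = 1 := by
    rw [hτdef, Matrix.trace_smul, Matrix.trace_sub, Matrix.trace_smul, hρ1, hσ1, smul_eq_mul,
      smul_eq_mul, mul_one]
    rw [show (1 : ℂ) - (ε : ℂ) = ((1 - ε : ℝ) : ℂ) by push_cast; ring]
    rw [← Complex.ofReal_mul, inv_mul_cancel₀ (ne_of_gt h1εpos), Complex.ofReal_one]
  have hcomb : ρ = (ε : ℂ) • σ + (((1 - ε : ℝ)) : ℂ) • τ := by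
    rw [hτdef, smul_smul, ← Complex.ofReal_mul, mul_inv_cancel₀ (ne_of_gt h1εpos),
      Complex.ofReal_one, one_smul]
    abel
  set A : Matrix (Fin 2) (Fin 2) ℂ := E σ with hAdef
  set B : Matrix (Fin 2) (Fin 2) ℂ := E τ with hBdef
  have hEρ : Q = (ε : ℂ) • A + (((1 - ε : ℝ)) : ℂ) • B := by
    rw [← hρQ, hcomb, map_add, LinearMap.map_smul, LinearMap.map_smul]
  have hA : A.PosSemidef := aux_E_psd E hE hσ
  have hB : B.PosSemidef := aux_E_psd E hE hτpsd
  have hAt : A.trace = 1 := by rw [hAdef, hE.2 σ, hσ1]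
  -- the orthogonal complement projection
  set P : Matrix (Fin 2) (Fin 2) ℂ := 1 - Q with hPdef
  have hQH : Qᴴ = Q := hQ.1.1
  have hPH : Pᴴ = P := by rw [hPdef, Matrix.conjTranspose_sub, Matrix.conjTranspose_one, hQH]
  have hPQ : P * Q = 0 := by rw [hPdef, Matrix.sub_mul, one_mul, hQ.2.2, sub_self]
  have hPAP : (P * A * P).PosSemidef := by
    have := hA.conjTranspose_mul_mul_same P
    rwa [hPH] at this
  have hPBP : (P * B * P).PosSemidef := by
    have := hB.conjTranspose_mul_mul_same P
    rwa [hPH] at this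
  have heq : (ε : ℂ) • (P * A * P) + (((1 - ε : ℝ)) : ℂ) • (P * B * P) = 0 := by
    have hz : P * Q * P = (ε : ℂ) • (P * A * P) + (((1 - ε : ℝ)) : ℂ) • (P * B * P) := by
      rw [hEρ, Matrix.mul_add, Matrix.add_mul, Matrix.mul_smul, Matrix.smul_mul,
        Matrix.mul_smul, Matrix.smul_mul]
    rw [← hz, hPQ, Matrix.zero_mul]
  -- quadratic forms of P*A*P vanish
  have hqz : ∀ x : Fin 2 → ℂ, dotProduct (star x) ((P * A * P) *ᵥ x) = 0 := by
    intro x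
    have h1 : dotProduct (star x)
        (((ε : ℂ) • (P * A * P) + (((1 - ε : ℝ)) : ℂ) • (P * B * P)) *ᵥ x) = 0 := by
      rw [heq]
      simp
    rw [Matrix.add_mulVec, Matrix.smul_mulVec, Matrix.smul_mulVec,
      dotProduct_add, dotProduct_smul, dotProduct_smul, smul_eq_mul,
      smul_eq_mul] at h1
    have ha := hPAP.dotProduct_mulVec_nonneg x
    have hb := hPBP.dotProduct_mulVec_nonneg x
    have h2 : (0 : ℂ) ≤ (ε : ℂ) * dotProduct (star x) ((P * A * P) *ᵥ x) :=
      mul_nonneg (Complex.zero_le_real.mpr hεpos.le) ha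
    have h3 : (0 : ℂ) ≤ (((1 - ε : ℝ)) : ℂ) * dotProduct (star x) ((P * B * P) *ᵥ x) :=
      mul_nonneg (Complex.zero_le_real.mpr h1εpos.le) hb
    have h4 : (ε : ℂ) * dotProduct (star x) ((P * A * P) *ᵥ x) = 0 := by
      have hle : (ε : ℂ) * dotProduct (star x) ((P * A * P) *ᵥ x) ≤ 0 := by
        rw [show (ε : ℂ) * dotProduct (star x) ((P * A * P) *ᵥ x)
          = -((((1 - ε : ℝ)) : ℂ) * dotProduct (star x) ((P * B * P) *ᵥ x)) by
            linear_combination h1]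
        exact neg_nonpos.mpr h3
      exact le_antisymm hle h2
    rcases mul_eq_zero.mp h4 with h5 | h5
    · exact absurd h5 (by exact_mod_cast ne_of_gt hεpos)
    · exact h5
  have hPAP0 : P * A * P = 0 := by
    ext i j
    have hv := (hPAP.dotProduct_mulVec_zero_iff (Pi.single j 1)).mp (hqz (Pi.single j 1))
    rw [Matrix.mulVec_single] at hv
    simpa using congrFun hv i
  -- deduce A = Q * A * Q
  obtain ⟨C, hC⟩ := aux_psd_decomp hA
  have hCP : C * P = 0 := by
    have : (C * P)ᴴ * (C * P) = P * A * P := by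
      rw [Matrix.conjTranspose_mul, hPH, Matrix.mul_assoc, ← Matrix.mul_assoc Cᴴ C P, ← hC,
        Matrix.mul_assoc]
    rw [← Matrix.conjTranspose_mul_self_eq_zero (A := C * P), this, hPAP0]
  have hAP : A * P = 0 := by
    rw [hC, Matrix.mul_assoc, hCP, Matrix.mul_zero]
  have hAQ : A * Q = A := by
    have h' : A * P = A - A * Q := by rw [hPdef, Matrix.mul_sub, Matrix.mul_one]
    rw [hAP] at h'
    exact (sub_eq_zero.mp h'.symm).symm
  have hQA : Q * A = A := by
    have := congrArg Matrix.conjTranspose hAQ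
    rwa [Matrix.conjTranspose_mul, hQH, hA.1.eq] at this
  have hdet0 : Q.det = 0 := aux_det_zero Q hQ.2.2 hQ.2.1
  have hfin : A = A.trace • Q := by
    have := aux_rankone Q hdet0 A
    rwa [hQA, hAQ] at this
  rw [hAt, one_smul] at hfin
  exact hfin
end

section
/- For any quantum channel E on d×d matrices, the operator norm of its superoperator (matrix) representation Φ_E, acting on the vectorized d²-dimensional space with Euclidean norm, satisfies ‖Φ_E‖_∞ ≤ √d. -/
open scoped ComplexOrder

/-- The superoperator (matrix) representation of a map on matrices, acting on the
row-wise vectorization: `Φ_E (i,j),(k,l) = E(|k⟩⟨l|) i j`. -/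
def superop {d : ℕ} (E : Matrix (Fin d) (Fin d) ℂ →ₗ[ℂ] Matrix (Fin d) (Fin d) ℂ) :
    Matrix (Fin d × Fin d) (Fin d × Fin d) ℂ :=
  Matrix.of fun p q : Fin d × Fin d => E (Matrix.single q.1 q.2 1) p.1 p.2

section Helpers

open Complex Finset

/-- Cauchy–Schwarz for complex sums, `normSq` version. -/
private lemma cs_normSq {ι : Type*} [Fintype ι] (f g : ι → ℂ) :
    Complex.normSq (∑ i, f i * g i) ≤
      (∑ i, Complex.normSq (f i)) * (∑ i, Complex.normSq (g i)) := by
  have h1 : ‖∑ i, f i * g i‖ ≤ ∑ i, ‖f i‖ * ‖g i‖ := by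
    refine le_trans (norm_sum_le _ _) ?_
    simp [norm_mul]
  have h2 := Finset.sum_mul_sq_le_sq_mul_sq Finset.univ (fun i => ‖f i‖)
      (fun i => ‖g i‖)
  calc Complex.normSq (∑ i, f i * g i) = ‖∑ i, f i * g i‖ ^ 2 :=
        (Complex.sq_norm _).symm
    _ ≤ (∑ i, ‖f i‖ * ‖g i‖) ^ 2 := by
        exact pow_le_pow_left₀ (norm_nonneg _) h1 2
    _ ≤ (∑ i, ‖f i‖ ^ 2) * (∑ i, ‖g i‖ ^ 2) := h2
    _ = _ := by simp [Complex.sq_norm]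

private lemma cs3 {κ α β : Type*} [Fintype κ] [Fintype α] [Fintype β] (f g : κ → α → β → ℂ) :
    Complex.normSq (∑ t, ∑ k, ∑ i, f t k i * g t k i) ≤
      (∑ t, ∑ k, ∑ i, Complex.normSq (f t k i)) *
        (∑ t, ∑ k, ∑ i, Complex.normSq (g t k i)) := by
  have := cs_normSq (ι := κ × α × β) (fun z => f z.1 z.2.1 z.2.2) (fun z => g z.1 z.2.1 z.2.2)
  simpa only [Fintype.sum_prod_type] using this

private lemma sum_perm1 {M : Type*} [AddCommMonoid M] {α β γ δ ε : Type*}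
    [Fintype α] [Fintype β] [Fintype γ] [Fintype δ] [Fintype ε]
    (f : α → β → γ → δ → ε → M) :
    (∑ a, ∑ b, ∑ c, ∑ x, ∑ y, f a b c x y) = ∑ y, ∑ c, ∑ b, ∑ x, ∑ a, f a b c x y := by
  calc (∑ a, ∑ b, ∑ c, ∑ x, ∑ y, f a b c x y)
      = ∑ z : α × β × γ × δ × ε, f z.1 z.2.1 z.2.2.1 z.2.2.2.1 z.2.2.2.2 := by
        simp only [Fintype.sum_prod_type]
    _ = ∑ z : ε × γ × β × δ × α, f z.2.2.2.2 z.2.2.1 z.2.1 z.2.2.2.1 z.1 :=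
        Fintype.sum_equiv
          ⟨fun z => (z.2.2.2.2, z.2.2.1, z.2.1, z.2.2.2.1, z.1),
           fun w => (w.2.2.2.2, w.2.2.1, w.2.1, w.2.2.2.1, w.1),
           fun _ => rfl, fun _ => rfl⟩ _ _ (fun z => rfl)
    _ = _ := by simp only [Fintype.sum_prod_type]

private lemma sum_perm2 {M : Type*} [AddCommMonoid M] {α β γ δ ε : Type*}
    [Fintype α] [Fintype β] [Fintype γ] [Fintype δ] [Fintype ε]
    (f : α → β → γ → δ → ε → M) :
    (∑ a, ∑ b, ∑ c, ∑ x, ∑ y, f a b c x y) = ∑ b, ∑ x, ∑ y, ∑ c, ∑ a, f a b c x y := by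
  calc (∑ a, ∑ b, ∑ c, ∑ x, ∑ y, f a b c x y)
      = ∑ z : α × β × γ × δ × ε, f z.1 z.2.1 z.2.2.1 z.2.2.2.1 z.2.2.2.2 := by
        simp only [Fintype.sum_prod_type]
    _ = ∑ z : β × δ × ε × γ × α, f z.2.2.2.2 z.1 z.2.2.2.1 z.2.1 z.2.2.1 :=
        Fintype.sum_equiv
          ⟨fun z => (z.2.1, z.2.2.2.1, z.2.2.2.2, z.2.2.1, z.1),
           fun w => (w.2.2.2.2, w.1, w.2.2.2.1, w.2.1, w.2.2.1),
           fun _ => rfl, fun _ => rfl⟩ _ _ (fun z => rfl)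
    _ = _ := by simp only [Fintype.sum_prod_type]

private lemma sum_perm3 {M : Type*} [AddCommMonoid M] {α β γ : Type*}
    [Fintype α] [Fintype β] [Fintype γ] (f : α → β → γ → M) :
    (∑ a, ∑ b, ∑ c, f a b c) = ∑ b, ∑ c, ∑ a, f a b c := by
  calc (∑ a, ∑ b, ∑ c, f a b c)
      = ∑ z : α × β × γ, f z.1 z.2.1 z.2.2 := by simp only [Fintype.sum_prod_type]
    _ = ∑ z : β × γ × α, f z.2.2 z.1 z.2.1 :=
        Fintype.sum_equiv
          ⟨fun z => (z.2.1, z.2.2, z.1), fun w => (w.2.2, w.1, w.2.1),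
           fun _ => rfl, fun _ => rfl⟩ _ _ (fun z => rfl)
    _ = _ := by simp only [Fintype.sum_prod_type]

end Helpers

section Core

open Complex Finset

private lemma EX_expand {d : ℕ} (E : Matrix (Fin d) (Fin d) ℂ →ₗ[ℂ] Matrix (Fin d) (Fin d) ℂ)
    (X : Matrix (Fin d) (Fin d) ℂ) (i j : Fin d) :
    E X i j = ∑ k, ∑ l, X k l * E (Matrix.single k l 1) i j := by
  have hX : X = ∑ k : Fin d, ∑ l : Fin d, X k l • Matrix.single k l (1:ℂ) := by
    conv_lhs => rw [Matrix.matrix_eq_sum_single X]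
    refine Finset.sum_congr rfl fun k _ => Finset.sum_congr rfl fun l _ => ?_
    rw [Matrix.smul_single, smul_eq_mul, mul_one]
  conv_lhs => rw [hX]
  rw [map_sum]
  simp only [map_sum, map_smul, Matrix.sum_apply, Matrix.smul_apply, smul_eq_mul]

private lemma core {d : ℕ} (E : Matrix (Fin d) (Fin d) ℂ →ₗ[ℂ] Matrix (Fin d) (Fin d) ℂ)
    (hE : IsCPTP E) (X : Matrix (Fin d) (Fin d) ℂ) :
    (∑ i, ∑ j, Complex.normSq (E X i j)) ≤ d * ∑ k, ∑ l, Complex.normSq (X k l) := by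
  classical
  obtain ⟨R, hR⟩ : ∃ R : Matrix (Fin d × Fin d) (Fin d × Fin d) ℂ, (Matrix.of fun p q : Fin d × Fin d =>
      E (Matrix.single p.1 q.1 1) p.2 q.2) = R.conjTranspose * R := by
    open scoped MatrixOrder in
    obtain ⟨Y, hY, -, hYY⟩ := CFC.exists_sqrt_of_isSelfAdjoint_of_quasispectrumRestricts
      hE.1.isHermitian (QuasispectrumRestricts.nnreal_of_nonneg hE.1.nonneg)
    exact ⟨Y, by rw [← hYY, show Y.conjTranspose = Y from hY]⟩
  -- entrywise factorization of the Choi matrix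
  have hCR : ∀ k i l j : Fin d, E (Matrix.single k l 1) i j
      = ∑ t : Fin d × Fin d, (starRingEnd ℂ) (R t (k, i)) * R t (l, j) := by
    intro k i l j
    have := congrFun (congrFun hR (k, i)) (l, j)
    simpa [Matrix.mul_apply, Matrix.conjTranspose_apply] using this
  -- trace preservation on basis matrices
  have htr : ∀ k l : Fin d, (∑ i, E (Matrix.single k l 1) i i)
      = if k = l then (1 : ℂ) else 0 := by
    intro k l
    have h := hE.2 (Matrix.single k l 1)
    have h2 : (Matrix.single k l (1:ℂ)).trace = if k = l then (1:ℂ) else 0 := by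
      simp [Matrix.trace, Matrix.diag, Matrix.single, ite_and, eq_comm]
    rw [h2] at h
    simpa [Matrix.trace, Matrix.diag] using h
  have hEX : ∀ i j : Fin d, E X i j
      = ∑ k, ∑ l, X k l * E (Matrix.single k l 1) i j := EX_expand E X
  -- main identity: pairing against any W
  have F1 : ∀ W : Fin d → Fin d → ℂ,
      (∑ i, ∑ j, W i j * E X i j)
      = ∑ t : Fin d × Fin d, ∑ k, ∑ i,
          (∑ l, X k l * R t (l, i)) * (∑ j, W j i * (starRingEnd ℂ) (R t (k, j))) := by
    intro W
    have lhs_eq : (∑ i, ∑ j, W i j * E X i j)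
        = ∑ i, ∑ j, ∑ k, ∑ l, ∑ t : Fin d × Fin d,
            W i j * (X k l * ((starRingEnd ℂ) (R t (k, i)) * R t (l, j))) := by
      simp only [hEX, hCR, Finset.mul_sum]
    rw [lhs_eq, sum_perm1]
    refine Finset.sum_congr rfl fun t _ => Finset.sum_congr rfl fun k _ =>
      Finset.sum_congr rfl fun i _ => ?_
    rw [Finset.sum_mul_sum]
    refine Finset.sum_congr rfl fun l _ => Finset.sum_congr rfl fun j _ => ?_
    ring
  -- norm of the first factor
  have F2 : (∑ t : Fin d × Fin d, ∑ k, ∑ i, Complex.normSq (∑ l, X k l * R t (l, i)))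
      = ∑ k, ∑ l, Complex.normSq (X k l) := by
    have F2C : (∑ t : Fin d × Fin d, ∑ k, ∑ i,
        ((starRingEnd ℂ) (∑ l, X k l * R t (l, i))) * (∑ l, X k l * R t (l, i)))
        = ∑ k, ∑ l, (starRingEnd ℂ) (X k l) * X k l := by
      have expand : (∑ t : Fin d × Fin d, ∑ k, ∑ i,
          ((starRingEnd ℂ) (∑ l, X k l * R t (l, i))) * (∑ l, X k l * R t (l, i)))
          = ∑ t : Fin d × Fin d, ∑ k, ∑ i, ∑ l', ∑ l,
              ((starRingEnd ℂ) (X k l') * X k l) *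
                ((starRingEnd ℂ) (R t (l', i)) * R t (l, i)) := by
        refine Finset.sum_congr rfl fun t _ => Finset.sum_congr rfl fun k _ =>
          Finset.sum_congr rfl fun i _ => ?_
        rw [map_sum, Finset.sum_mul_sum]
        refine Finset.sum_congr rfl fun l' _ => Finset.sum_congr rfl fun l _ => ?_
        simp only [map_mul]
        ring
      rw [expand, sum_perm2]
      have inner : ∀ k l' l : Fin d,
          (∑ i, ∑ t : Fin d × Fin d, ((starRingEnd ℂ) (X k l') * X k l) *
            ((starRingEnd ℂ) (R t (l', i)) * R t (l, i)))
          = ((starRingEnd ℂ) (X k l') * X k l) * (if l' = l then (1:ℂ) else 0) := by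
        intro k l' l
        simp only [← Finset.mul_sum]
        rw [← htr l' l]
        congr 1
        refine Finset.sum_congr rfl fun i _ => ?_
        rw [hCR l' i l i]
      calc (∑ k, ∑ l', ∑ l, ∑ i, ∑ t : Fin d × Fin d,
            ((starRingEnd ℂ) (X k l') * X k l) *
              ((starRingEnd ℂ) (R t (l', i)) * R t (l, i)))
          = ∑ k, ∑ l', ∑ l, ((starRingEnd ℂ) (X k l') * X k l) *
              (if l' = l then (1:ℂ) else 0) := by
            refine Finset.sum_congr rfl fun k _ => Finset.sum_congr rfl fun l' _ =>
              Finset.sum_congr rfl fun l _ => ?_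
            exact inner k l' l
        _ = ∑ k, ∑ l', (starRingEnd ℂ) (X k l') * X k l' := by
            refine Finset.sum_congr rfl fun k _ => Finset.sum_congr rfl fun l' _ => ?_
            simp [mul_ite]
        _ = _ := rfl
    have cast1 : (∑ t : Fin d × Fin d, ∑ k, ∑ i,
        ((starRingEnd ℂ) (∑ l, X k l * R t (l, i))) * (∑ l, X k l * R t (l, i)))
        = ((∑ t : Fin d × Fin d, ∑ k, ∑ i,
            Complex.normSq (∑ l, X k l * R t (l, i)) : ℝ) : ℂ) := by
      push_cast
      refine Finset.sum_congr rfl fun t _ => Finset.sum_congr rfl fun k _ =>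
        Finset.sum_congr rfl fun i _ => ?_
      rw [Complex.normSq_eq_conj_mul_self]
    have cast2 : (∑ k, ∑ l, (starRingEnd ℂ) (X k l) * X k l)
        = ((∑ k, ∑ l, Complex.normSq (X k l) : ℝ) : ℂ) := by
      push_cast
      refine Finset.sum_congr rfl fun k _ => Finset.sum_congr rfl fun l _ => ?_
      rw [Complex.normSq_eq_conj_mul_self]
    have : ((∑ t : Fin d × Fin d, ∑ k, ∑ i,
        Complex.normSq (∑ l, X k l * R t (l, i)) : ℝ) : ℂ)
        = ((∑ k, ∑ l, Complex.normSq (X k l) : ℝ) : ℂ) := by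
      rw [← cast1, ← cast2, F2C]
    exact_mod_cast this
  -- bound on the second factor
  have F3 : ∀ W : Fin d → Fin d → ℂ,
      (∑ t : Fin d × Fin d, ∑ k, ∑ i,
        Complex.normSq (∑ j, W j i * (starRingEnd ℂ) (R t (k, j))))
      ≤ (∑ i, ∑ j, Complex.normSq (W j i)) * d := by
    intro W
    have step1 : ∀ (t : Fin d × Fin d) (k i : Fin d),
        Complex.normSq (∑ j, W j i * (starRingEnd ℂ) (R t (k, j)))
        ≤ (∑ j, Complex.normSq (W j i)) * (∑ j, Complex.normSq (R t (k, j))) := by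
      intro t k i
      have := cs_normSq (fun j => W j i) (fun j => (starRingEnd ℂ) (R t (k, j)))
      simpa [Complex.normSq_conj] using this
    have step2 : (∑ t : Fin d × Fin d, ∑ k, ∑ i,
        (∑ j, Complex.normSq (W j i)) * (∑ j, Complex.normSq (R t (k, j))))
        = (∑ i, ∑ j, Complex.normSq (W j i)) *
            (∑ t : Fin d × Fin d, ∑ k, ∑ j, Complex.normSq (R t (k, j))) := by
      calc (∑ t : Fin d × Fin d, ∑ k, ∑ i,
            (∑ j, Complex.normSq (W j i)) * (∑ j, Complex.normSq (R t (k, j))))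
          = ∑ t : Fin d × Fin d, ∑ k, (∑ i, ∑ j, Complex.normSq (W j i)) *
              (∑ j, Complex.normSq (R t (k, j))) := by
            refine Finset.sum_congr rfl fun t _ => Finset.sum_congr rfl fun k _ => ?_
            rw [← Finset.sum_mul]
        _ = _ := by
            simp only [← Finset.mul_sum]
    have step3 : (∑ t : Fin d × Fin d, ∑ k, ∑ j, Complex.normSq (R t (k, j))) = d := by
      rw [sum_perm3]
      have h2 : ∀ k : Fin d, (∑ j, ∑ t : Fin d × Fin d, Complex.normSq (R t (k, j))) = 1 := by
        intro k
        have hc : ((∑ j, ∑ t : Fin d × Fin d, Complex.normSq (R t (k, j)) : ℝ) : ℂ)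
            = (1 : ℂ) := by
          calc ((∑ j, ∑ t : Fin d × Fin d, Complex.normSq (R t (k, j)) : ℝ) : ℂ)
              = ∑ j, ∑ t : Fin d × Fin d, (starRingEnd ℂ) (R t (k, j)) * R t (k, j) := by
                push_cast
                refine Finset.sum_congr rfl fun j _ => Finset.sum_congr rfl fun t _ => ?_
                rw [Complex.normSq_eq_conj_mul_self]
            _ = ∑ j, E (Matrix.single k k 1) j j :=
                Finset.sum_congr rfl fun j _ => (hCR k j k j).symm
            _ = if k = k then 1 else 0 := htr k k
            _ = 1 := if_pos rfl
        exact_mod_cast hc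
      simp [h2]
    calc (∑ t : Fin d × Fin d, ∑ k, ∑ i,
          Complex.normSq (∑ j, W j i * (starRingEnd ℂ) (R t (k, j))))
        ≤ ∑ t : Fin d × Fin d, ∑ k, ∑ i,
            (∑ j, Complex.normSq (W j i)) * (∑ j, Complex.normSq (R t (k, j))) := by
          refine Finset.sum_le_sum fun t _ => Finset.sum_le_sum fun k _ =>
            Finset.sum_le_sum fun i _ => step1 t k i
      _ = _ := by rw [step2, step3]
  -- put everything together
  set S : ℝ := ∑ i, ∑ j, Complex.normSq (E X i j) with hSdef
  set T : ℝ := ∑ k, ∑ l, Complex.normSq (X k l) with hTdef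
  have hS0 : 0 ≤ S := Finset.sum_nonneg fun i _ => Finset.sum_nonneg fun j _ =>
    Complex.normSq_nonneg _
  have hT0 : 0 ≤ T := Finset.sum_nonneg fun k _ => Finset.sum_nonneg fun l _ =>
    Complex.normSq_nonneg _
  have hScast : (∑ i, ∑ j, (starRingEnd ℂ) (E X i j) * E X i j) = ((S : ℝ) : ℂ) := by
    rw [hSdef]
    push_cast
    refine Finset.sum_congr rfl fun i _ => Finset.sum_congr rfl fun j _ => ?_
    rw [Complex.normSq_eq_conj_mul_self]
  have big := F1 (fun i j => (starRingEnd ℂ) (E X i j))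
  rw [hScast] at big
  have csb := cs3 (fun (t : Fin d × Fin d) k i => ∑ l, X k l * R t (l, i))
      (fun (t : Fin d × Fin d) k i => ∑ j, (starRingEnd ℂ) (E X j i) * (starRingEnd ℂ) (R t (k, j)))
  rw [← big] at csb
  rw [Complex.normSq_ofReal] at csb
  have hQ := F3 (fun i j => (starRingEnd ℂ) (E X i j))
  have hQW : (∑ i, ∑ j, Complex.normSq ((starRingEnd ℂ) (E X j i))) = S := by
    rw [hSdef]
    simp only [Complex.normSq_conj]
    exact Finset.sum_comm
  rw [hQW] at hQ
  have key : S * S ≤ T * (S * d) := by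
    calc S * S ≤ _ * _ := csb
      _ ≤ T * (S * d) := by
          rw [F2]
          exact mul_le_mul_of_nonneg_left hQ (hTdef ▸ hT0)
  rcases hS0.eq_or_lt with h0 | hpos
  · rw [← h0]
    positivity
  · have key2 : S * S ≤ (↑d * T) * S := by
      calc S * S ≤ T * (S * ↑d) := key
        _ = (↑d * T) * S := by ring
    exact le_of_mul_le_mul_right key2 hpos

end Core

theorem superop_opNorm_le_sqrt_dim
    (d : ℕ) (E : Matrix (Fin d) (Fin d) ℂ →ₗ[ℂ] Matrix (Fin d) (Fin d) ℂ)
    (hE : IsCPTP E) :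
    ‖Matrix.toEuclideanCLM (𝕜 := ℂ) (superop E)‖ ≤ Real.sqrt d := by
  refine ContinuousLinearMap.opNorm_le_bound _ (Real.sqrt_nonneg _) fun v => ?_
  set w : (Fin d × Fin d) → ℂ := (WithLp.equiv 2 ((Fin d × Fin d) → ℂ)) v with hw
  set Xv : Matrix (Fin d) (Fin d) ℂ := Matrix.of fun k l => w (k, l) with hXv
  have happ : ∀ p : Fin d × Fin d,
      (Matrix.toEuclideanCLM (𝕜 := ℂ) (superop E) v) p = E Xv p.1 p.2 := by
    intro p
    have h1 : (Matrix.toEuclideanCLM (𝕜 := ℂ) (superop E) v) p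
        = ((superop E).mulVec w) p := by
      have h := Matrix.ofLp_toEuclideanCLM (𝕜 := ℂ) (superop E) v
      calc (Matrix.toEuclideanCLM (𝕜 := ℂ) (superop E) v) p
          = (WithLp.equiv 2 _ (Matrix.toEuclideanCLM (𝕜 := ℂ) (superop E) v)) p := rfl
        _ = (Matrix.toLin' (superop E) w) p := congrFun h p
        _ = _ := by rw [Matrix.toLin'_apply]
    rw [h1]
    have h2 : ((superop E).mulVec w) p
        = ∑ q : Fin d × Fin d, E (Matrix.single q.1 q.2 1) p.1 p.2 * w q := by
      simp [Matrix.mulVec, dotProduct, superop]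
    rw [h2, EX_expand E Xv p.1 p.2, Fintype.sum_prod_type]
    refine Finset.sum_congr rfl fun k _ => Finset.sum_congr rfl fun l _ => ?_
    rw [hXv]
    simp [mul_comm]
  have hnorm1 : ‖Matrix.toEuclideanCLM (𝕜 := ℂ) (superop E) v‖
      = Real.sqrt (∑ p : Fin d × Fin d, Complex.normSq (E Xv p.1 p.2)) := by
    rw [EuclideanSpace.norm_eq]
    congr 1
    refine Finset.sum_congr rfl fun p _ => ?_
    rw [happ p, Complex.sq_norm]
  have hnorm2 : ‖v‖ = Real.sqrt (∑ q : Fin d × Fin d, Complex.normSq (w q)) := by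
    rw [EuclideanSpace.norm_eq]
    refine congrArg _ (Finset.sum_congr rfl fun q _ => ?_)
    rw [Complex.sq_norm]
    rfl
  rw [hnorm1, hnorm2]
  have hcore := core E hE Xv
  have hsum : (∑ p : Fin d × Fin d, Complex.normSq (E Xv p.1 p.2))
      ≤ d * ∑ q : Fin d × Fin d, Complex.normSq (w q) := by
    calc (∑ p : Fin d × Fin d, Complex.normSq (E Xv p.1 p.2))
        = ∑ i, ∑ j, Complex.normSq (E Xv i j) := by rw [Fintype.sum_prod_type]
      _ ≤ d * ∑ k, ∑ l, Complex.normSq (Xv k l) := hcore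
      _ = d * ∑ q : Fin d × Fin d, Complex.normSq (w q) := by
          rw [Fintype.sum_prod_type]
          rfl
  calc Real.sqrt (∑ p : Fin d × Fin d, Complex.normSq (E Xv p.1 p.2))
      ≤ Real.sqrt (d * ∑ q : Fin d × Fin d, Complex.normSq (w q)) := Real.sqrt_le_sqrt hsum
    _ = Real.sqrt d * Real.sqrt (∑ q : Fin d × Fin d, Complex.normSq (w q)) :=
        Real.sqrt_mul (Nat.cast_nonneg d) _
end

section
/- Let |Ω⟩ = Σ_{i=0}^{1} Σ_{j=0}^{N−1} f_{ij} |a_i⟩|b_j⟩ be a normalized pure state on ℂ² ⊗ ℂ^N written in product orthonormal bases. Then 2·√(Σ_{j<k} |f_{0j} f_{1k} − f_{1j} f_{0k}|²) = 2·√(λ(1−λ)), where λ is an eigenvalue of the reduced state Tr₂(|Ω⟩⟨Ω|) on ℂ². -/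
open Finset in
lemma sum_pairs_decomp {M : ℕ} (g : Fin M → Fin M → ℂ) :
    ∑ j, ∑ k, g j k
      = (∑ j, g j j) + ∑ j, ∑ k ∈ Finset.Ioi j, (g j k + g k j) := by
  have h1 : ∀ j : Fin M, ∑ k ∈ Finset.Ioi j, g j k
      = ∑ k, if j < k then g j k else 0 := by
    intro j
    rw [← Finset.sum_filter]
    congr 1
    ext k; simp
  have h2 : ∀ j : Fin M, ∑ k ∈ Finset.Ioi j, g k j
      = ∑ k, if j < k then g k j else 0 := by
    intro j
    rw [← Finset.sum_filter]
    congr 1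
    ext k; simp
  have key : ∀ j k : Fin M, g j k
      = (if j = k then g j k else 0) + (if j < k then g j k else 0)
        + (if k < j then g j k else 0) := by
    intro j k
    rcases lt_trichotomy j k with h | h | h
    · simp [h, h.ne, h.not_gt, (lt_asymm h)]
    · simp [h, lt_irrefl]
    · simp [h, h.ne', h.not_gt, (lt_asymm h)]
  calc ∑ j, ∑ k, g j k
      = ∑ j, ∑ k, ((if j = k then g j k else 0) + (if j < k then g j k else 0)
        + (if k < j then g j k else 0)) := by
        refine Finset.sum_congr rfl fun j _ => Finset.sum_congr rfl fun k _ => key j k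
    _ = (∑ j, ∑ k, if j = k then g j k else 0)
        + (∑ j, ∑ k, if j < k then g j k else 0)
        + (∑ j, ∑ k, if k < j then g j k else 0) := by
        simp [Finset.sum_add_distrib]
    _ = (∑ j, g j j) + (∑ j, ∑ k, if j < k then g j k else 0)
        + (∑ k, ∑ j, if k < j then g j k else 0) := by
        rw [Finset.sum_comm (f := fun j k => if k < j then g j k else 0)]
        congr 1
        congr 1
        refine Finset.sum_congr rfl fun j _ => ?_
        simp
    _ = (∑ j, g j j) + ∑ j, ∑ k ∈ Finset.Ioi j, (g j k + g k j) := by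
        rw [add_assoc]
        congr 1
        rw [← Finset.sum_add_distrib]
        refine Finset.sum_congr rfl fun j _ => ?_
        rw [Finset.sum_add_distrib, h1 j, h2 j]

theorem concurrence_eq_sqrt_eigenvalue_product
    (N : ℕ) (f : Fin 2 → Fin N → ℂ)
    (hnorm : ∑ i, ∑ j, ‖f i j‖ ^ 2 = 1)
    (lam : ℝ)
    (hlam : Module.End.HasEigenvalue
      (Matrix.toLin' (Matrix.of fun i k : Fin 2 =>
        ∑ j, f i j * (starRingEnd ℂ) (f k j))) (lam : ℂ)) :
    2 * Real.sqrt (∑ j : Fin N, ∑ k ∈ Finset.Ioi j,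
        ‖f 0 j * f 1 k - f 1 j * f 0 k‖ ^ 2)
      = 2 * Real.sqrt (lam * (1 - lam)) := by
  set M : Matrix (Fin 2) (Fin 2) ℂ := Matrix.of fun i k : Fin 2 =>
    ∑ j, f i j * (starRingEnd ℂ) (f k j) with hM
  set a : ℂ := ∑ j, f 0 j * (starRingEnd ℂ) (f 0 j) with ha
  set b : ℂ := ∑ j, f 0 j * (starRingEnd ℂ) (f 1 j) with hb
  set c : ℂ := ∑ j, f 1 j * (starRingEnd ℂ) (f 0 j) with hc
  set d : ℂ := ∑ j, f 1 j * (starRingEnd ℂ) (f 1 j) with hd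
  -- determinant equation from the eigenvalue
  obtain ⟨v, hv⟩ := hlam.exists_hasEigenvector
  have hmul : (M - (lam : ℂ) • 1).mulVec v = 0 := by
    have h1 : M.mulVec v = (lam : ℂ) • v := by
      have := hv.apply_eq_smul
      rwa [Matrix.toLin'_apply] at this
    rw [Matrix.sub_mulVec, h1, Matrix.smul_mulVec, Matrix.one_mulVec, sub_self]
  have hdet : (M - (lam : ℂ) • 1).det = 0 := by
    rw [← Matrix.exists_mulVec_eq_zero_iff]
    exact ⟨v, hv.right, hmul⟩
  have hdet2 : (a - lam) * (d - lam) - b * c = 0 := by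
    rw [Matrix.det_fin_two] at hdet
    simpa [hM, ha, hb, hc, hd, Matrix.sub_apply, Matrix.smul_apply, Matrix.one_apply] using hdet
  -- trace is 1
  have htr : a + d = 1 := by
    have h0 : ∀ i, (∑ j, f i j * (starRingEnd ℂ) (f i j))
        = ((∑ j, ‖f i j‖ ^ 2 : ℝ) : ℂ) := by
      intro i
      push_cast
      refine Finset.sum_congr rfl fun j _ => ?_
      rw [Complex.mul_conj]
      norm_cast
      exact (Complex.sq_norm _).symm
    rw [ha, hd, h0 0, h0 1]
    rw [Fin.sum_univ_two] at hnorm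
    norm_cast
  -- pure algebra: lam(1-lam) = ad - bc
  have hlameq : ((lam : ℂ)) * (1 - lam) = a * d - b * c := by
    linear_combination -hdet2 - (lam : ℂ) * htr
  -- Lagrange identity
  set g : Fin N → Fin N → ℂ := fun j k =>
    f 0 j * (starRingEnd ℂ) (f 0 j) * (f 1 k * (starRingEnd ℂ) (f 1 k))
      - f 0 j * (starRingEnd ℂ) (f 1 j) * (f 1 k * (starRingEnd ℂ) (f 0 k)) with hg
  have hsumg : ∑ j, ∑ k, g j k = a * d - b * c := by
    rw [ha, hd, hb, hc, Finset.sum_mul_sum, Finset.sum_mul_sum, hg]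
    rw [← Finset.sum_sub_distrib]
    refine Finset.sum_congr rfl fun j _ => ?_
    rw [← Finset.sum_sub_distrib]
  have hdiag : ∀ j, g j j = 0 := by
    intro j; rw [hg]; ring
  have hpair : ∀ j k, g j k + g k j
      = ((‖f 0 j * f 1 k - f 1 j * f 0 k‖ ^ 2 : ℝ) : ℂ) := by
    intro j k
    have : ((‖f 0 j * f 1 k - f 1 j * f 0 k‖ ^ 2 : ℝ) : ℂ)
        = (f 0 j * f 1 k - f 1 j * f 0 k)
          * (starRingEnd ℂ) (f 0 j * f 1 k - f 1 j * f 0 k) := by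
      rw [Complex.mul_conj]
      norm_cast
      exact Complex.sq_norm _
    rw [this, hg]
    simp only [map_sub, map_mul]
    ring
  have hS : ((∑ j : Fin N, ∑ k ∈ Finset.Ioi j,
      ‖f 0 j * f 1 k - f 1 j * f 0 k‖ ^ 2 : ℝ) : ℂ)
      = ((lam * (1 - lam) : ℝ) : ℂ) := by
    push_cast
    rw [show ((lam : ℂ)) * (1 - (lam : ℂ)) = a * d - b * c from hlameq]
    rw [← hsumg, sum_pairs_decomp g]
    simp only [hdiag, Finset.sum_const_zero, zero_add]
    refine Finset.sum_congr rfl fun j _ => Finset.sum_congr rfl fun k _ => ?_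
    rw [hpair j k]
    push_cast
    ring
  have hfinal : (∑ j : Fin N, ∑ k ∈ Finset.Ioi j,
      ‖f 0 j * f 1 k - f 1 j * f 0 k‖ ^ 2) = lam * (1 - lam) :=
    Complex.ofReal_inj.mp hS
  rw [hfinal]
end
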